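/- For F ∈ SMU(δ=1) (saturated minimally unsatisfiable of deficiency 1), the doped clause-set D(F) has exactly 2^{c(F)} − 1 prime implicates, namely { pure(D(F')) : ∅ ≠ F' ⊆ F }. -/

import Mathlib

/-- Literals: a variable (ℕ) with a polarity. -/
abbrev Lit := ℕ × Bool

/-- Complement of a literal. -/
def Lit.comp (x : Lit) : Lit := (x.1, !x.2)

/-- A clause is a finite set of literals. -/
abbrev Clause := Finset Lit

/-- A clause-set (CNF). -/
abbrev ClauseSet := Finset Clause

/-- Complementation of all literals of a clause. -/
def Clause.compl (C : Clause) : Clause := C.image Lit.comp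

/-- Value of a literal under a total assignment. -/
def Lit.eval (a : ℕ → Bool) (x : Lit) : Bool := if x.2 then a x.1 else !(a x.1)

/-- A clause is satisfied by an assignment iff some literal evaluates to true. -/
def Clause.sat (a : ℕ → Bool) (C : Clause) : Prop := ∃ x ∈ C, Lit.eval a x = true

/-- An assignment satisfies a clause-set (as CNF) iff it satisfies every clause. -/
def satisfies (a : ℕ → Bool) (F : ClauseSet) : Prop := ∀ C ∈ F, Clause.sat a C

/-- Semantic entailment of a clause. -/
def entails (F : ClauseSet) (C : Clause) : Prop := ∀ a, satisfies a F → Clause.sat a C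

def unsat (F : ClauseSet) : Prop := ¬ ∃ a, satisfies a F

/-- Logical equivalence of clause-sets. -/
def equivCls (F G : ClauseSet) : Prop := ∀ a, satisfies a F ↔ satisfies a G

/-- Minimally unsatisfiable clause-sets. -/
def minUnsat (F : ClauseSet) : Prop := unsat F ∧ ∀ F' ⊂ F, ¬ unsat F'

/-- A clause is complement-free (no clashing pair). -/
def tautFree (C : Clause) : Prop := ∀ x ∈ C, Lit.comp x ∉ C

/-- F is a minimal premise set for clause C. -/
def mpsFor (F : ClauseSet) (C : Clause) : Prop :=
  tautFree C ∧ entails F C ∧ ∀ F' ⊂ F, ¬ entails F' C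

/-- F is a minimal premise set. -/
def isMps (F : ClauseSet) : Prop := ∃ C, mpsFor F C

/-- C is a prime implicate of F. -/
def primeImp (F : ClauseSet) (C : Clause) : Prop :=
  tautFree C ∧ entails F C ∧ ∀ C' ⊂ C, ¬ entails F C'

/-- The set of all prime implicates of F. -/
def primeSet (F : ClauseSet) : Set Clause := {C | primeImp F C}

/-- The set of literals occurring in F. -/
def lits (F : ClauseSet) : Finset Lit := F.sup id

/-- The pure clause of F: the set of pure literals of F. -/
def pureC (F : ClauseSet) : Clause := (lits F).filter (fun x => Lit.comp x ∉ lits F)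

def varsC (C : Clause) : Finset ℕ := C.image Prod.fst

def vars (F : ClauseSet) : Finset ℕ := F.sup varsC

/-- Partial assignments. -/
abbrev PAssign := ℕ → Option Bool

/-- Value of a literal under a partial assignment. -/
def Lit.pval (φ : PAssign) (x : Lit) : Option Bool :=
  (φ x.1).map (fun b => if x.2 then b else !b)

/-- Removing falsified literals from a clause. -/
def papplyC (φ : PAssign) (C : Clause) : Clause := C.filter (fun x => Lit.pval φ x ≠ some false)

/-- A clause is satisfied by a partial assignment. -/
def csat (φ : PAssign) (C : Clause) : Prop := ∃ x ∈ C, Lit.pval φ x = some true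

instance (φ : PAssign) (C : Clause) : Decidable (csat φ C) := by
  unfold csat; exact inferInstance

/-- Application φ * F of a partial assignment to a clause-set. -/
def papply (φ : PAssign) (F : ClauseSet) : ClauseSet :=
  (F.filter (fun C => ¬ csat φ C)).image (papplyC φ)

/-- The partial assignment setting precisely the pure literals of F to false. -/
def pureFalse (F : ClauseSet) : PAssign := fun v =>
  if ((v, true) : Lit) ∈ pureC F then some false
  else if ((v, false) : Lit) ∈ pureC F then some true
  else none

/-- Doping: add a fresh positive variable `u C` to every clause C. -/
def dope (u : Clause → ℕ) (F : ClauseSet) : ClauseSet :=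
  F.image (fun C => insert ((u C, true) : Lit) C)

/-- The doping variables are fresh and pairwise distinct. -/
def freshDoping (u : Clause → ℕ) (F : ClauseSet) : Prop :=
  (∀ C ∈ F, u C ∉ vars F) ∧ Set.InjOn u ↑F

/-- Resolution trees: axioms at leaves, resolution steps at inner nodes
(with the designated resolution literal). -/
inductive ResTree where
  | ax : Clause → ResTree
  | res : Lit → ResTree → ResTree → ResTree

/-- Conclusion clause of a resolution tree. -/
def ResTree.concl : ResTree → Clause
  | .ax C => C
  | .res x T1 T2 => (T1.concl ∪ T2.concl) \ {x, Lit.comp x}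

/-- Validity: at each step the two parents clash in exactly the resolution literal. -/
def ResTree.valid : ResTree → Prop
  | .ax _ => True
  | .res x T1 T2 => T1.valid ∧ T2.valid ∧ T1.concl ∩ Clause.compl T2.concl = {x}

/-- Axioms (leaf clauses) of a resolution tree. -/
def ResTree.axioms : ResTree → ClauseSet
  | .ax C => {C}
  | .res _ T1 T2 => T1.axioms ∪ T2.axioms

/-- Horton-Strahler number of a resolution tree. -/
def ResTree.hts : ResTree → ℕ
  | .ax _ => 0
  | .res _ T1 T2 => if T1.hts = T2.hts then T1.hts + 1 else max T1.hts T2.hts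

/-- Regularity: no resolution variable repeated on a root-to-leaf path. -/
def ResTree.regAux : ResTree → Finset ℕ → Prop
  | .ax _, _ => True
  | .res x T1 T2, S => x.1 ∉ S ∧ T1.regAux (insert x.1 S) ∧ T2.regAux (insert x.1 S)

def ResTree.regular (T : ResTree) : Prop := T.regAux ∅

/-- k-resolution: each step has a parent clause of length at most k. -/
def ResTree.kres (k : ℕ) : ResTree → Prop
  | .ax _ => True
  | .res _ T1 T2 => (T1.concl.card ≤ k ∨ T2.concl.card ≤ k) ∧ T1.kres k ∧ T2.kres k

/-- F has a resolution refutation of Horton-Strahler number at most k. -/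
def refutesLe (F : ClauseSet) (k : ℕ) : Prop :=
  ∃ T : ResTree, T.valid ∧ T.axioms ⊆ F ∧ T.concl = ∅ ∧ T.hts ≤ k

/-- Hardness at most k: every unsatisfiable instantiation has a refutation of
Horton-Strahler number at most k. -/
def hdLe (F : ClauseSet) (k : ℕ) : Prop :=
  ∀ φ : PAssign, unsat (papply φ F) → refutesLe (papply φ F) k

/-- Hardness. -/
noncomputable def hd (F : ClauseSet) : ℕ := sInf {k | hdLe F k}

/-- F has a k-resolution refutation. -/
def kresRefutes (F : ClauseSet) (k : ℕ) : Prop :=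
  ∃ T : ResTree, T.valid ∧ T.axioms ⊆ F ∧ T.concl = ∅ ∧ ResTree.kres k T

/-- Asymmetric width-hardness at most k. -/
def whdLe (F : ClauseSet) (k : ℕ) : Prop :=
  ∀ φ : PAssign, unsat (papply φ F) → kresRefutes (papply φ F) k

/-- Hyperedge E^k_C of the trigger hypergraph of F. -/
def Ek (F : ClauseSet) (k : ℕ) (C : Clause) : Set Clause :=
  {C' | primeImp F C' ∧ C' ∩ Clause.compl C = ∅ ∧ (C' \ C).card ≤ k}

/-- Saturated minimal unsatisfiability. -/
def saturatedMU (F : ClauseSet) : Prop :=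
  minUnsat F ∧ ∀ C ∈ F, ∀ x : Lit, x.1 ∉ varsC C →
    ¬ unsat (insert (insert x C) (F.erase C))
/-! ### Module 0: basic lemmas -/

open Finset

lemma eval_congr {a b : ℕ → Bool} {x : Lit} (h : a x.1 = b x.1) :
    Lit.eval a x = Lit.eval b x := by
  cases x with | mk v p => simp only [Lit.eval] at *; rw [h]

lemma eval_true_iff (a : ℕ → Bool) (x : Lit) : Lit.eval a x = true ↔ a x.1 = x.2 := by
  cases x with | mk v p => cases p <;> simp [Lit.eval]

lemma eval_false_iff (a : ℕ → Bool) (x : Lit) : Lit.eval a x = false ↔ a x.1 = !x.2 := by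
  cases x with | mk v p => cases p <;> simp [Lit.eval]

lemma eval_comp (a : ℕ → Bool) (x : Lit) : Lit.eval a x.comp = !(Lit.eval a x) := by
  cases x with | mk v p => cases p <;> simp [Lit.eval, Lit.comp]

lemma comp_comp (x : Lit) : x.comp.comp = x := by
  cases x with | mk v p => simp [Lit.comp]

lemma comp_var (x : Lit) : x.comp.1 = x.1 := rfl

lemma eq_or_comp_of_var_eq {x y : Lit} (h : x.1 = y.1) : x = y ∨ x = y.comp := by
  cases x with | mk v p =>
  cases y with | mk w q =>
  simp only at h
  subst h
  cases p <;> cases q <;> simp [Lit.comp]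

lemma mem_varsC {v : ℕ} {C : Clause} : v ∈ varsC C ↔ ∃ x ∈ C, x.1 = v := by
  simp [varsC]

lemma mem_varsC_of_mem {x : Lit} {C : Clause} (h : x ∈ C) : x.1 ∈ varsC C :=
  mem_varsC.mpr ⟨x, h, rfl⟩

lemma mem_vars {v : ℕ} {F : ClauseSet} : v ∈ vars F ↔ ∃ C ∈ F, v ∈ varsC C := by
  simp [vars, Finset.mem_sup]

lemma mem_lits {x : Lit} {F : ClauseSet} : x ∈ lits F ↔ ∃ C ∈ F, x ∈ C := by
  simp [lits, Finset.mem_sup]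

lemma varsC_subset_vars {C : Clause} {F : ClauseSet} (h : C ∈ F) : varsC C ⊆ vars F :=
  fun v hv => mem_vars.mpr ⟨C, h, hv⟩

lemma vars_mono {F G : ClauseSet} (h : F ⊆ G) : vars F ⊆ vars G := by
  intro v hv; rcases mem_vars.mp hv with ⟨C, hC, h2⟩; exact mem_vars.mpr ⟨C, h hC, h2⟩

lemma mem_pureC {x : Lit} {F : ClauseSet} :
    x ∈ pureC F ↔ x ∈ lits F ∧ x.comp ∉ lits F := by
  simp [pureC]

lemma vars_union (F G : ClauseSet) : vars (F ∪ G) = vars F ∪ vars G :=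
  Finset.sup_union

lemma clause_sat_congr {a b : ℕ → Bool} {C : Clause} (h : ∀ v ∈ varsC C, a v = b v) :
    Clause.sat a C ↔ Clause.sat b C := by
  constructor <;> rintro ⟨x, hx, hev⟩
  · exact ⟨x, hx, by rw [← eval_congr (h _ (mem_varsC_of_mem hx))]; exact hev⟩
  · exact ⟨x, hx, by rw [eval_congr (h _ (mem_varsC_of_mem hx))]; exact hev⟩

lemma satisfies_congr {a b : ℕ → Bool} {F : ClauseSet} (h : ∀ v ∈ vars F, a v = b v) :
    satisfies a F ↔ satisfies b F := by
  constructor <;> intro hs C hC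
  · exact (clause_sat_congr (fun v hv => h v (varsC_subset_vars hC hv))).mp (hs C hC)
  · exact (clause_sat_congr (fun v hv => h v (varsC_subset_vars hC hv))).mpr (hs C hC)

lemma satisfies_mono {a : ℕ → Bool} {F G : ClauseSet} (h : F ⊆ G) (hs : satisfies a G) :
    satisfies a F := fun C hC => hs C (h hC)

/-- From minimal unsatisfiability: erasing any clause gives a satisfiable set. -/
lemma minUnsat.sat_erase {F : ClauseSet} (h : minUnsat F) {C : Clause} (hC : C ∈ F) :
    ∃ a, satisfies a (F.erase C) := by
  have := h.2 (F.erase C) (Finset.erase_ssubset hC)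
  rwa [unsat, not_not] at this

lemma minUnsat.sat_of_ssubset {F : ClauseSet} (h : minUnsat F) {G : ClauseSet} (hG : G ⊂ F) :
    ∃ a, satisfies a G := by
  have := h.2 G hG; rwa [unsat, not_not] at this

lemma minUnsat.not_sat_self {F : ClauseSet} (h : minUnsat F) (a : ℕ → Bool) :
    ¬ satisfies a F := fun hs => h.1 ⟨a, hs⟩

/-- If a satisfies F minus C, it must falsify C. -/
lemma minUnsat.not_sat_clause {F : ClauseSet} (h : minUnsat F) {C : Clause} (hC : C ∈ F)
    {a : ℕ → Bool} (ha : satisfies a (F.erase C)) : ¬ Clause.sat a C := by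
  intro hsc
  apply h.not_sat_self a
  intro D hD
  rcases eq_or_ne D C with rfl | hne
  · exact hsc
  · exact ha D (Finset.mem_erase.mpr ⟨hne, hD⟩)

/-- Clauses of a MU set are complement-free. -/
lemma minUnsat.tautFree {F : ClauseSet} (h : minUnsat F) {C : Clause} (hC : C ∈ F) :
    tautFree C := by
  intro x hx hcx
  rcases h.sat_erase hC with ⟨a, ha⟩
  apply h.not_sat_clause hC ha
  rcases Bool.eq_false_or_eq_true (Lit.eval a x) with ht | hf
  · exact ⟨x, hx, ht⟩
  · exact ⟨x.comp, hcx, by rw [eval_comp, hf]; rfl⟩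

/-- Clauses of a MU set are pairwise incomparable. -/
lemma minUnsat.incomp {F : ClauseSet} (h : minUnsat F) {C C' : Clause}
    (hC : C ∈ F) (hC' : C' ∈ F) (hne : C ≠ C') (hsub : C ⊆ C') : False := by
  rcases h.sat_erase hC' with ⟨a, ha⟩
  apply h.not_sat_clause hC' ha
  rcases ha C (Finset.mem_erase.mpr ⟨fun hh => hne hh, hC⟩) with ⟨x, hx, hev⟩
  exact ⟨x, hsub hx, hev⟩

/-- Every variable of a MU set occurs in both polarities. -/
lemma minUnsat.both_signs {F : ClauseSet} (h : minUnsat F) {v : ℕ} (hv : v ∈ vars F)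
    (p : Bool) : ∃ C ∈ F, (v, p) ∈ C := by
  by_contra hno
  push_neg at hno
  rcases mem_vars.mp hv with ⟨C₀, hC₀, hvC₀⟩
  rcases mem_varsC.mp hvC₀ with ⟨x, hxC₀, hxv⟩
  have hx : x = (v, !p) := by
    rcases eq_or_comp_of_var_eq (show x.1 = ((v,p) : Lit).1 from hxv) with h1 | h1
    · exact absurd (h1 ▸ hxC₀) (hno _ hC₀)
    · simpa [Lit.comp] using h1
  rcases h.sat_erase hC₀ with ⟨a, ha⟩
  set a' : ℕ → Bool := fun u => if u = v then !p else a u with ha'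
  have hvval : a' v = !p := by simp [ha']
  have hevx : Lit.eval a' (v, !p) = true := by
    rw [eval_true_iff]; exact hvval
  apply h.not_sat_self a'
  intro D hD
  rcases eq_or_ne D C₀ with rfl | hne
  · exact ⟨x, hxC₀, by rw [hx]; exact hevx⟩
  · rcases ha D (Finset.mem_erase.mpr ⟨hne, hD⟩) with ⟨y, hy, hev⟩
    rcases eq_or_ne y.1 v with hyv | hyv
    · have hy' : y = (v, !p) := by
        rcases eq_or_comp_of_var_eq (show y.1 = ((v,p) : Lit).1 from hyv) with h1 | h1
        · exact absurd (h1 ▸ hy) (hno _ hD)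
        · simpa [Lit.comp] using h1
      exact ⟨y, hy, by rw [hy']; exact hevx⟩
    · refine ⟨y, hy, ?_⟩
      rw [eval_congr (show a y.1 = a' y.1 by simp [ha', hyv])] at hev
      exact hev
/-! ### Module 1: deficiency lemmas (Tarsi) -/

open Classical in
/-- Hall-type selection of literals on distinct variables avoiding `V0`. -/
lemma hall_literals (S : ClauseSet) (V0 : Finset ℕ)
    (h : ∀ T ⊆ S, T.card ≤ (T.sup (fun C => varsC C \ V0)).card) :
    ∃ g : Clause → Lit, (∀ C ∈ S, g C ∈ C ∧ (g C).1 ∉ V0) ∧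
      ∀ C ∈ S, ∀ C' ∈ S, (g C).1 = (g C').1 → C = C' := by
  have hall : ∀ s : Finset {C // C ∈ S}, s.card ≤ (s.biUnion (fun C => varsC C.1 \ V0)).card := by
    intro s
    have h1 : (s.image Subtype.val).card = s.card := Finset.card_image_of_injective _ Subtype.val_injective
    have h2 : s.biUnion (fun C => varsC C.1 \ V0) = (s.image Subtype.val).sup (fun C => varsC C \ V0) := by
      rw [Finset.sup_image]
      rw [Finset.sup_eq_biUnion]
      rfl
    rw [h2, ← h1]
    exact h _ (by intro C hC; rcases Finset.mem_image.mp hC with ⟨⟨D, hD⟩, _, rfl⟩; exact hD)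
  rcases (Finset.all_card_le_biUnion_card_iff_exists_injective _).mp hall with ⟨f, hfinj, hf⟩
  have hpick : ∀ C : {C // C ∈ S}, ∃ x : Lit, x ∈ C.1 ∧ x.1 = f C := by
    intro C
    have := hf C
    rcases Finset.mem_sdiff.mp this with ⟨hv, _⟩
    rcases mem_varsC.mp hv with ⟨x, hx, hx2⟩
    exact ⟨x, hx, hx2⟩
  refine ⟨fun C => if hC : C ∈ S then (hpick ⟨C, hC⟩).choose else ((0,true) : Lit), ?_, ?_⟩
  · intro C hC
    rcases (hpick ⟨C, hC⟩).choose_spec with ⟨hmem, hvar⟩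
    refine ⟨by simp only [dif_pos hC]; exact hmem, ?_⟩
    simp only [dif_pos hC]
    rw [hvar]
    exact (Finset.mem_sdiff.mp (hf ⟨C, hC⟩)).2
  · intro C hC C' hC' heq
    simp only [dif_pos hC, dif_pos hC'] at heq
    rw [(hpick ⟨C, hC⟩).choose_spec.2, (hpick ⟨C', hC'⟩).choose_spec.2] at heq
    have := hfinj heq
    exact congrArg Subtype.val this

open Classical in
/-- Build a satisfying assignment of `H ∪ S` from one of `H` together with a
Hall system of literal representatives for `S` avoiding `vars H`. -/
lemma sat_of_selection {H S : ClauseSet} (a₀ : ℕ → Bool) (ha₀ : satisfies a₀ H)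
    (g : Clause → Lit) (hg : ∀ C ∈ S, g C ∈ C ∧ (g C).1 ∉ vars H)
    (hginj : ∀ C ∈ S, ∀ C' ∈ S, (g C).1 = (g C').1 → C = C') :
    ∃ a, satisfies a (H ∪ S) := by
  refine ⟨fun v => if hv : ∃ C, C ∈ S ∧ (g C).1 = v then (g hv.choose).2 else a₀ v, ?_⟩
  intro C hC
  rcases Finset.mem_union.mp hC with hCH | hCS
  · have hagree : ∀ v ∈ varsC C, (fun v => if hv : ∃ C, C ∈ S ∧ (g C).1 = v then (g hv.choose).2 else a₀ v) v = a₀ v := by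
      intro v hv
      have hvH : v ∈ vars H := varsC_subset_vars hCH hv
      have : ¬ ∃ C, C ∈ S ∧ (g C).1 = v := by
        rintro ⟨D, hD, hDv⟩
        exact (hg D hD).2 (hDv ▸ hvH)
      simp [this]
    exact (clause_sat_congr hagree).mpr (ha₀ C hCH)
  · refine ⟨g C, (hg C hCS).1, ?_⟩
    rw [eval_true_iff]
    have hex : ∃ D, D ∈ S ∧ (g D).1 = (g C).1 := ⟨C, hCS, rfl⟩
    rw [dif_pos hex]
    have hsp := hex.choose_spec
    have : hex.choose = C := hginj _ hsp.1 _ hCS hsp.2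
    rw [this]

/-- The central deficiency lemma: for minimally unsatisfiable `F`,
`F` is the unique maximizer of the deficiency among nonempty subsets. -/
lemma mu_max_deficiency {F : ClauseSet} (h : minUnsat F) {H : ClauseSet}
    (hHF : H ⊆ F) (hne : H.Nonempty)
    (hmax : ∀ H' ⊆ F, H'.Nonempty →
      (H'.card : ℤ) - ((vars H').card : ℤ) ≤ (H.card : ℤ) - ((vars H).card : ℤ)) :
    H = F := by
  by_contra hneF
  have hSne : (F \ H).Nonempty := by
    rw [Finset.sdiff_nonempty]
    intro hsub
    exact hneF (Finset.Subset.antisymm hHF hsub)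
  -- Hall condition for F \ H relative to vars H
  have hall : ∀ T ⊆ F \ H, T.card ≤ (T.sup (fun C => varsC C \ vars H)).card := by
    intro T hT
    by_contra hlt
    push_neg at hlt
    have hTne : T.Nonempty := by
      rw [Finset.nonempty_iff_ne_empty]
      rintro rfl
      simp at hlt
    have hdisj : Disjoint H T := by
      refine Finset.disjoint_left.mpr ?_
      intro C hCH hCT
      exact (Finset.mem_sdiff.mp (hT hCT)).2 hCH
    have hcard : (H ∪ T).card = H.card + T.card := Finset.card_union_of_disjoint hdisj
    have hvars : vars (H ∪ T) ⊆ vars H ∪ T.sup (fun C => varsC C \ vars H) := by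
      intro v hv
      rcases mem_vars.mp hv with ⟨C, hC, hvC⟩
      rcases Finset.mem_union.mp hC with h1 | h1
      · exact Finset.mem_union_left _ (mem_vars.mpr ⟨C, h1, hvC⟩)
      · by_cases hvH : v ∈ vars H
        · exact Finset.mem_union_left _ hvH
        · refine Finset.mem_union_right _ ?_
          exact Finset.le_sup (f := fun C => varsC C \ vars H) h1 (Finset.mem_sdiff.mpr ⟨hvC, hvH⟩)
    have hvc : ((vars (H ∪ T)).card : ℤ) ≤ (vars H).card + ((T.sup (fun C => varsC C \ vars H)).card : ℤ) := by
      have := (Finset.card_le_card hvars).trans (Finset.card_union_le _ _)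
      exact_mod_cast this
    have := hmax (H ∪ T) (Finset.union_subset hHF (hT.trans Finset.sdiff_subset)) (hne.mono Finset.subset_union_left)
    rw [hcard] at this
    have hlt' : ((T.sup (fun C => varsC C \ vars H)).card : ℤ) < (T.card : ℤ) := by exact_mod_cast hlt
    omega
  rcases hall_literals (F \ H) (vars H) hall with ⟨g, hg, hginj⟩
  have hHss : H ⊂ F := Finset.ssubset_iff_subset_ne.mpr ⟨hHF, hneF⟩
  rcases h.sat_of_ssubset hHss with ⟨a₀, ha₀⟩
  rcases sat_of_selection a₀ ha₀ g hg hginj with ⟨a, ha⟩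
  apply h.not_sat_self a
  intro C hC
  apply ha
  rcases Finset.mem_union.mp (Finset.mem_union_left (F \ H) (Finset.mem_union_right H hC)) with _ | _ <;>
    · by_cases hCH : C ∈ H
      · exact Finset.mem_union_left _ hCH
      · exact Finset.mem_union_right _ (Finset.mem_sdiff.mpr ⟨hC, hCH⟩)

/-- Tarsi's lemma plus strict deficiency for proper subsets. -/
theorem mu_deficiency {F : ClauseSet} (h : minUnsat F) :
    (vars F).card + 1 ≤ F.card ∧
    ∀ H ⊆ F, H.Nonempty → H ≠ F →
      (H.card : ℤ) - ((vars H).card : ℤ) ≤ (F.card : ℤ) - ((vars F).card : ℤ) - 1 := by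
  classical
  have hFne : F.Nonempty := by
    rw [Finset.nonempty_iff_ne_empty]
    rintro rfl
    exact h.1 ⟨fun _ => true, fun C hC => absurd hC (Finset.notMem_empty C)⟩
  -- maximizer of deficiency among nonempty subsets
  have hcand : (F.powerset.filter (fun H => H.Nonempty)).Nonempty :=
    ⟨F, Finset.mem_filter.mpr ⟨Finset.mem_powerset_self F, hFne⟩⟩
  rcases Finset.exists_max_image _ (fun H => (H.card : ℤ) - ((vars H).card : ℤ)) hcand
    with ⟨H, hHmem, hHmax⟩
  rcases Finset.mem_filter.mp hHmem with ⟨hHpow, hHne⟩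
  have hHF : H ⊆ F := Finset.mem_powerset.mp hHpow
  have hmax' : ∀ H' ⊆ F, H'.Nonempty →
      (H'.card : ℤ) - ((vars H').card : ℤ) ≤ (H.card : ℤ) - ((vars H).card : ℤ) := by
    intro H' hH'F hH'ne
    exact hHmax H' (Finset.mem_filter.mpr ⟨Finset.mem_powerset.mpr hH'F, hH'ne⟩)
  have hHeq : H = F := mu_max_deficiency h hHF hHne hmax'
  subst hHeq
  -- existence of a deficient subset
  have hdef1 : ∃ T ⊆ H, T.Nonempty ∧ ((vars T).card : ℤ) < (T.card : ℤ) := by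
    by_contra hno
    push_neg at hno
    have hall : ∀ T ⊆ H, T.card ≤ (T.sup (fun C => varsC C \ (∅ : Finset ℕ))).card := by
      intro T hT
      rcases Finset.eq_empty_or_nonempty T with rfl | hTne
      · simp
      have := hno T hT hTne
      have hv : T.sup (fun C => varsC C \ (∅ : Finset ℕ)) = vars T := by
        simp [vars]
      rw [hv]
      omega
    rcases hall_literals H ∅ hall with ⟨g, hg, hginj⟩
    have hg' : ∀ C ∈ H, g C ∈ C ∧ (g C).1 ∉ vars (∅ : ClauseSet) := by
      intro C hC
      exact ⟨(hg C hC).1, by simp [vars]⟩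
    rcases sat_of_selection (fun _ => true) (fun C hC => absurd hC (Finset.notMem_empty C)) g hg' hginj
      with ⟨a, ha⟩
    apply h.not_sat_self a
    intro C hC
    exact ha C (Finset.mem_union_right _ hC)
  rcases hdef1 with ⟨T, hTH, hTne, hTdef⟩
  have hTle := hmax' T hTH hTne
  constructor
  · -- Tarsi
    have : ((vars H).card : ℤ) + 1 ≤ (H.card : ℤ) := by omega
    exact_mod_cast this
  · intro H' hH'F hH'ne hH'neF
    by_contra hgt
    push_neg at hgt
    have : (H.card : ℤ) - ((vars H).card : ℤ) ≤ (H'.card : ℤ) - ((vars H').card : ℤ) := by omega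
    have hH'eq : H' = H := mu_max_deficiency h hH'F hH'ne (fun H'' h1 h2 => (hmax' H'' h1 h2).trans this)
    exact hH'neF hH'eq
/-! ### Module 2: splitting -/

/-- Splitting: assign value `b` to variable `v` and simplify. -/
def splitCS (v : ℕ) (b : Bool) (F : ClauseSet) : ClauseSet :=
  (F.filter (fun C => (v, b) ∉ C)).image (fun C => C.erase (v, !b))

lemma mem_splitCS {v : ℕ} {b : Bool} {F : ClauseSet} {D : Clause} :
    D ∈ splitCS v b F ↔ ∃ C ∈ F, (v, b) ∉ C ∧ C.erase (v, !b) = D := by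
  simp [splitCS, and_assoc]

lemma varsC_erase_subset (C : Clause) (y : Lit) : varsC (C.erase y) ⊆ varsC C := by
  intro w hw
  rcases mem_varsC.mp hw with ⟨x, hx, rfl⟩
  exact mem_varsC_of_mem (Finset.erase_subset _ _ hx)

lemma not_mem_varsC_erase {v : ℕ} {b : Bool} {C : Clause} (h : (v, b) ∉ C) :
    v ∉ varsC (C.erase (v, !b)) := by
  intro hv
  rcases mem_varsC.mp hv with ⟨x, hx, hxv⟩
  rcases Finset.mem_erase.mp hx with ⟨hxne, hxC⟩
  rcases eq_or_comp_of_var_eq (show x.1 = ((v, b) : Lit).1 from hxv) with h1 | h1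
  · exact h (h1 ▸ hxC)
  · exact hxne (by simpa [Lit.comp] using h1)

lemma split_sat_up {v : ℕ} {b : Bool} {F : ClauseSet} {a : ℕ → Bool}
    (ha : satisfies a (splitCS v b F)) :
    satisfies (Function.update a v b) F := by
  intro C hC
  by_cases hvb : (v, b) ∈ C
  · exact ⟨(v, b), hvb, by rw [eval_true_iff]; simp⟩
  · rcases ha _ (mem_splitCS.mpr ⟨C, hC, hvb, rfl⟩) with ⟨x, hx, hev⟩
    rcases Finset.mem_erase.mp hx with ⟨hxne, hxC⟩
    have hxv : x.1 ≠ v := by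
      intro hxv
      rcases eq_or_comp_of_var_eq (show x.1 = ((v, b) : Lit).1 from hxv) with h1 | h1
      · exact hvb (h1 ▸ hxC)
      · exact hxne (by simpa [Lit.comp] using h1)
    refine ⟨x, hxC, ?_⟩
    rw [← hev]
    exact (eval_congr (by simp [Function.update, hxv])).symm

lemma split_unsat {v : ℕ} {b : Bool} {F : ClauseSet} (h : unsat F) :
    unsat (splitCS v b F) := by
  rintro ⟨a, ha⟩
  exact h ⟨_, split_sat_up ha⟩

/-- On a MU set, clause reduction is injective. -/
lemma split_erase_inj {F : ClauseSet} (h : minUnsat F) {v : ℕ} {b : Bool} {C C' : Clause}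
    (hC : C ∈ F) (hC' : C' ∈ F) (hbC : (v, b) ∉ C) (hbC' : (v, b) ∉ C')
    (heq : C.erase (v, !b) = C'.erase (v, !b)) : C = C' := by
  by_contra hne
  by_cases h1 : (v, !b) ∈ C <;> by_cases h2 : (v, !b) ∈ C'
  · apply hne
    ext x
    constructor <;> intro hx
    · rcases eq_or_ne x (v, !b) with rfl | hxne
      · exact h2
      · have : x ∈ C'.erase (v, !b) := heq ▸ Finset.mem_erase.mpr ⟨hxne, hx⟩
        exact (Finset.mem_erase.mp this).2
    · rcases eq_or_ne x (v, !b) with rfl | hxne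
      · exact h1
      · have : x ∈ C.erase (v, !b) := heq ▸ Finset.mem_erase.mpr ⟨hxne, hx⟩
        exact (Finset.mem_erase.mp this).2
  · have hsub : C' ⊆ C := by
      rw [← Finset.erase_eq_of_notMem h2, ← heq]
      exact Finset.erase_subset _ _
    exact h.incomp hC' hC (fun hh => hne hh.symm) hsub
  · have hsub : C ⊆ C' := by
      rw [← Finset.erase_eq_of_notMem h1, heq]
      exact Finset.erase_subset _ _
    exact h.incomp hC hC' hne hsub
  · apply hne
    rw [← Finset.erase_eq_of_notMem h1, ← Finset.erase_eq_of_notMem h2, heq]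

lemma split_card {F : ClauseSet} (h : minUnsat F) (v : ℕ) (b : Bool) :
    (splitCS v b F).card = (F.filter (fun C => (v, b) ∉ C)).card := by
  apply Finset.card_image_of_injOn
  intro C hC C' hC' heq
  rcases Finset.mem_filter.mp hC with ⟨h1, h2⟩
  rcases Finset.mem_filter.mp hC' with ⟨h1', h2'⟩
  exact split_erase_inj h h1 h1' h2 h2' heq

lemma vars_splitCS {v : ℕ} {b : Bool} {F : ClauseSet} (h : minUnsat F) :
    vars (splitCS v b F) = vars (F.filter (fun C => (v, b) ∉ C)) \ {v} := by
  ext w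
  simp only [Finset.mem_sdiff, Finset.mem_singleton]
  constructor
  · intro hw
    rcases mem_vars.mp hw with ⟨D, hD, hwD⟩
    rcases mem_splitCS.mp hD with ⟨C, hC, hbC, rfl⟩
    refine ⟨mem_vars.mpr ⟨C, Finset.mem_filter.mpr ⟨hC, hbC⟩, varsC_erase_subset _ _ hwD⟩, ?_⟩
    rintro rfl
    exact not_mem_varsC_erase hbC hwD
  · rintro ⟨hw, hwv⟩
    rcases mem_vars.mp hw with ⟨C, hC, hwC⟩
    rcases Finset.mem_filter.mp hC with ⟨hCF, hbC⟩
    rcases mem_varsC.mp hwC with ⟨x, hx, rfl⟩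
    refine mem_vars.mpr ⟨C.erase (v, !b), mem_splitCS.mpr ⟨C, hCF, hbC, rfl⟩, ?_⟩
    exact mem_varsC_of_mem (Finset.mem_erase.mpr ⟨fun hh => hwv (by rw [hh]), hx⟩)

lemma minUnsat_of_erase_sat {S : ClauseSet} (hu : unsat S)
    (hs : ∀ D ∈ S, ∃ a, satisfies a (S.erase D)) : minUnsat S := by
  refine ⟨hu, ?_⟩
  intro G hG
  rcases Finset.exists_of_ssubset hG with ⟨D, hDS, hDG⟩
  rcases hs D hDS with ⟨a, ha⟩
  rw [unsat, not_not]
  exact ⟨a, fun C hC => ha C (Finset.mem_erase.mpr ⟨fun hh => hDG (hh ▸ hC), hG.1 hC⟩)⟩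

/-- Splitting a saturated MU set on any value of any variable yields a MU set. -/
lemma split_MU {F : ClauseSet} (h : saturatedMU F) (v : ℕ) (b : Bool) :
    minUnsat (splitCS v b F) := by
  apply minUnsat_of_erase_sat (split_unsat h.1.1)
  intro D hD
  rcases mem_splitCS.mp hD with ⟨C, hC, hbC, rfl⟩
  -- find a satisfying F.erase C with a v = b
  have key : ∃ a, satisfies a (F.erase C) ∧ a v = b := by
    by_cases hnb : (v, !b) ∈ C
    · rcases h.1.sat_erase hC with ⟨a, ha⟩
      have hns := h.1.not_sat_clause hC ha
      refine ⟨a, ha, ?_⟩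
      by_contra hne
      exact hns ⟨(v, !b), hnb, by rw [eval_true_iff]; simp; cases b <;> simp_all⟩
    · have hvnot : v ∉ varsC C := by
        intro hv
        rcases mem_varsC.mp hv with ⟨x, hx, hxv⟩
        rcases eq_or_comp_of_var_eq (show x.1 = ((v, b) : Lit).1 from hxv) with h1 | h1
        · exact hbC (h1 ▸ hx)
        · subst h1; exact hnb (by simpa [Lit.comp] using hx)
      have := h.2 C hC (v, b) hvnot
      rw [unsat, not_not] at this
      rcases this with ⟨a, ha⟩
      have haer : satisfies a (F.erase C) :=
        satisfies_mono (Finset.subset_insert _ _) ha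
      have hns := h.1.not_sat_clause hC haer
      rcases ha _ (Finset.mem_insert_self _ _) with ⟨y, hy, hev⟩
      rcases Finset.mem_insert.mp hy with rfl | hyC
      · exact ⟨a, haer, by rw [eval_true_iff] at hev; exact hev⟩
      · exact absurd ⟨y, hyC, hev⟩ hns
  rcases key with ⟨a, ha, hav⟩
  have hns := h.1.not_sat_clause hC ha
  refine ⟨a, ?_⟩
  intro D' hD'
  rcases Finset.mem_erase.mp hD' with ⟨hne, hD'S⟩
  rcases mem_splitCS.mp hD'S with ⟨C'', hC'', hbC'', rfl⟩
  have hCne : C'' ≠ C := by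
    rintro rfl
    exact hne rfl
  rcases ha C'' (Finset.mem_erase.mpr ⟨hCne, hC''⟩) with ⟨y, hy, hev⟩
  refine ⟨y, ?_, hev⟩
  refine Finset.mem_erase.mpr ⟨?_, hy⟩
  rintro rfl
  rw [eval_true_iff] at hev
  simp at hev
  cases b <;> simp_all
/-! ### Module 3: counting consequences for saturated MU of deficiency 1 -/

/-- Clauses avoiding the variable `v`. -/
def frest (v : ℕ) (F : ClauseSet) : ClauseSet := F.filter (fun C => v ∉ varsC C)

/-- Clauses avoiding the literal `(v, b)`. -/
def favoid (v : ℕ) (b : Bool) (F : ClauseSet) : ClauseSet := F.filter (fun C => (v, b) ∉ C)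

/-- A tight subset: nonempty proper subset with as many clauses as variables. -/
def tightSet (F H : ClauseSet) : Prop :=
  H ⊆ F ∧ H.Nonempty ∧ H ≠ F ∧ H.card = (vars H).card

section Counting

variable {F : ClauseSet}

lemma T3nat (h : minUnsat F) (hdef : F.card = (vars F).card + 1)
    {H : ClauseSet} (hHF : H ⊆ F) (hne : H.Nonempty) (hneF : H ≠ F) :
    H.card ≤ (vars H).card := by
  have := (mu_deficiency h).2 H hHF hne hneF
  have h2 : (F.card : ℤ) = ((vars F).card : ℤ) + 1 := by exact_mod_cast hdef
  omega

lemma T2nat (h : minUnsat F) : (vars F).card + 1 ≤ F.card := (mu_deficiency h).1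

lemma mem_frest {v : ℕ} {C : Clause} : C ∈ frest v F ↔ C ∈ F ∧ v ∉ varsC C := by
  simp [frest]

lemma mem_favoid {v : ℕ} {b : Bool} {C : Clause} :
    C ∈ favoid v b F ↔ C ∈ F ∧ (v, b) ∉ C := by simp [favoid]

lemma frest_subset_favoid (v : ℕ) (b : Bool) : frest v F ⊆ favoid v b F := by
  intro C hC
  rcases mem_frest.mp hC with ⟨h1, h2⟩
  exact mem_favoid.mpr ⟨h1, fun hb => h2 (mem_varsC_of_mem hb)⟩

lemma splitCS_eq_favoid_image (v : ℕ) (b : Bool) :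
    splitCS v b F = (favoid v b F).image (fun C => C.erase (v, !b)) := rfl

variable (hs : saturatedMU F) (hdef : F.card = (vars F).card + 1)

include hs

lemma favoid_ne (v : ℕ) (hv : v ∈ vars F) (b : Bool) : favoid v b F ≠ F := by
  rcases hs.1.both_signs hv b with ⟨C, hC, hmem⟩
  intro heq
  have : C ∈ favoid v b F := heq.symm ▸ hC
  exact (mem_favoid.mp this).2 hmem

lemma favoid_nonempty (v : ℕ) (hv : v ∈ vars F) (b : Bool) : (favoid v b F).Nonempty := by
  rcases hs.1.both_signs hv (!b) with ⟨C, hC, hmem⟩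
  refine ⟨C, mem_favoid.mpr ⟨hC, fun hb => ?_⟩⟩
  have := hs.1.tautFree hC (v, b) hb
  simp [Lit.comp] at this
  exact this hmem

lemma mem_vars_favoid (v : ℕ) (hv : v ∈ vars F) (b : Bool) : v ∈ vars (favoid v b F) := by
  rcases hs.1.both_signs hv (!b) with ⟨C, hC, hmem⟩
  have hCin : C ∈ favoid v b F := by
    refine mem_favoid.mpr ⟨hC, fun hb => ?_⟩
    have := hs.1.tautFree hC (v, b) hb
    simp [Lit.comp] at this
    exact this hmem
  exact mem_vars.mpr ⟨C, hCin, mem_varsC_of_mem hmem⟩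

include hdef

/-- Tight count for favoid-sets. -/
lemma favoid_card_eq (v : ℕ) (hv : v ∈ vars F) (b : Bool) :
    (favoid v b F).card = (vars (favoid v b F)).card := by
  have hub : (favoid v b F).card ≤ (vars (favoid v b F)).card :=
    T3nat hs.1 hdef (Finset.filter_subset _ _) (favoid_nonempty hs v hv b) (favoid_ne hs v hv b)
  -- lower bound via Tarsi on the split
  have hMU := split_MU hs v b
  have hlow := T2nat hMU
  have hcard := split_card hs.1 v b
  have hvars := vars_splitCS (F := F) (v := v) (b := b) hs.1
  have hvmem : v ∈ vars (favoid v b F) := mem_vars_favoid hs v hv b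
  have hvc : (vars (splitCS v b F)).card = (vars (favoid v b F)).card - 1 := by
    rw [hvars]
    rw [show vars (Finset.filter (fun C => (v, b) ∉ C) F) = vars (favoid v b F) from rfl]
    rw [Finset.card_sdiff_of_subset (Finset.singleton_subset_iff.mpr hvmem)]
    simp
  have hpos : 1 ≤ (vars (favoid v b F)).card := Finset.card_pos.mpr ⟨v, hvmem⟩
  rw [hcard] at hlow
  rw [hvc] at hlow
  rw [show Finset.filter (fun C => (v, b) ∉ C) F = favoid v b F from rfl] at hlow
  omega

/-- The two favoid-sets cover all clauses, with multiplicity `card F + card (frest v)`. -/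
lemma favoid_card_sum (v : ℕ) :
    (favoid v true F).card + (favoid v false F).card = F.card + (frest v F).card := by
  classical
  have h1 : favoid v false F = F.filter (fun C => (v, false) ∉ C) := rfl
  -- count via filters
  have key : ∀ C ∈ F, ((if (v, true) ∉ C then 1 else 0) + (if (v, false) ∉ C then 1 else 0) : ℕ)
      = 1 + (if v ∉ varsC C then 1 else 0) := by
    intro C hC
    by_cases ht : (v, true) ∈ C <;> by_cases hf : (v, false) ∈ C
    · exfalso
      have := hs.1.tautFree hC (v, true) ht
      simp [Lit.comp] at this
      exact this hf
    · simp [ht, hf, mem_varsC_of_mem ht]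
    · simp [ht, hf, mem_varsC_of_mem hf]
    · have : v ∉ varsC C := by
        intro hv
        rcases mem_varsC.mp hv with ⟨x, hx, hxv⟩
        rcases eq_or_comp_of_var_eq (show x.1 = ((v, true) : Lit).1 from hxv) with h2 | h2
        · exact ht (h2 ▸ hx)
        · subst h2; exact hf (by simpa [Lit.comp] using hx)
      simp [ht, hf, this]
  have e1 : (favoid v true F).card = ∑ C ∈ F, (if (v, true) ∉ C then 1 else 0) := by
    rw [favoid, Finset.card_filter]
  have e2 : (favoid v false F).card = ∑ C ∈ F, (if (v, false) ∉ C then 1 else 0) := by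
    rw [favoid, Finset.card_filter]
  have e3 : (frest v F).card = ∑ C ∈ F, (if v ∉ varsC C then 1 else 0) := by
    rw [frest, Finset.card_filter]
  rw [e1, e2, e3, ← Finset.sum_add_distrib]
  rw [Finset.sum_congr rfl key]
  rw [Finset.sum_add_distrib, ← Finset.card_eq_sum_ones]

/-- The two favoid-sets cover all variables. -/
lemma favoid_vars_union (v : ℕ) :
    vars (favoid v true F) ∪ vars (favoid v false F) = vars F := by
  apply Finset.Subset.antisymm
  · apply Finset.union_subset <;> exact vars_mono (Finset.filter_subset _ _)
  · intro w hw
    rcases mem_vars.mp hw with ⟨C, hC, hwC⟩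
    by_cases ht : (v, true) ∈ C
    · have hf : (v, false) ∉ C := by
        have := hs.1.tautFree hC (v, true) ht
        simp [Lit.comp] at this
        exact this
      exact Finset.mem_union_right _ (mem_vars.mpr ⟨C, mem_favoid.mpr ⟨hC, hf⟩, hwC⟩)
    · exact Finset.mem_union_left _ (mem_vars.mpr ⟨C, mem_favoid.mpr ⟨hC, ht⟩, hwC⟩)

/-- Size of the shared variable set of the two favoid-sets. -/
lemma favoid_vars_inter_card (v : ℕ) (hv : v ∈ vars F) :
    (vars (favoid v true F) ∩ vars (favoid v false F)).card = (frest v F).card + 1 := by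
  have hu := favoid_vars_union hs hdef v
  have h1 := favoid_card_eq hs hdef v hv true
  have h2 := favoid_card_eq hs hdef v hv false
  have h3 := favoid_card_sum hs hdef v
  have hie : (vars (favoid v true F)).card + (vars (favoid v false F)).card
      = (vars F).card + (vars (favoid v true F) ∩ vars (favoid v false F)).card := by
    rw [← hu]
    exact (Finset.card_union_add_card_inter _ _).symm
  omega

/-- The rest-set is tight (if nonempty). -/
lemma frest_tight (v : ℕ) (hv : v ∈ vars F) (hne : (frest v F).Nonempty) :
    tightSet F (frest v F) ∧
    vars (frest v F) = (vars (favoid v true F) ∩ vars (favoid v false F)) \ {v} := by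
  have hsub : vars (frest v F) ⊆ (vars (favoid v true F) ∩ vars (favoid v false F)) \ {v} := by
    intro w hw
    rcases mem_vars.mp hw with ⟨C, hC, hwC⟩
    rcases mem_frest.mp hC with ⟨hCF, hvC⟩
    refine Finset.mem_sdiff.mpr ⟨Finset.mem_inter.mpr ⟨?_, ?_⟩, ?_⟩
    · exact mem_vars.mpr ⟨C, frest_subset_favoid _ _ hC, hwC⟩
    · exact mem_vars.mpr ⟨C, frest_subset_favoid _ _ hC, hwC⟩
    · simp only [Finset.mem_singleton]
      rintro rfl
      exact hvC hwC
  have hvmem : v ∈ vars (favoid v true F) ∩ vars (favoid v false F) :=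
    Finset.mem_inter.mpr ⟨mem_vars_favoid hs v hv true, mem_vars_favoid hs v hv false⟩
  have hcard1 : ((vars (favoid v true F) ∩ vars (favoid v false F)) \ {v}).card
      = (frest v F).card := by
    rw [Finset.card_sdiff_of_subset (Finset.singleton_subset_iff.mpr hvmem)]
    rw [favoid_vars_inter_card hs hdef v hv]
    simp
  have hneF : frest v F ≠ F := by
    intro heq
    rcases hs.1.both_signs hv true with ⟨C, hC, hmem⟩
    have : C ∈ frest v F := heq.symm ▸ hC
    exact (mem_frest.mp this).2 (mem_varsC_of_mem hmem)
  have hle : (frest v F).card ≤ (vars (frest v F)).card :=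
    T3nat hs.1 hdef (Finset.filter_subset _ _) hne hneF
  have hle2 : (vars (frest v F)).card ≤ (frest v F).card := by
    calc (vars (frest v F)).card ≤ _ := Finset.card_le_card hsub
    _ = _ := hcard1
  have hceq : (frest v F).card = (vars (frest v F)).card := le_antisymm hle hle2
  refine ⟨⟨Finset.filter_subset _ _, hne, hneF, hceq⟩, ?_⟩
  apply Finset.eq_of_subset_of_card_le hsub
  rw [hcard1, hceq]

end Counting
/-! ### Module 4: existence of a sibling pair -/

lemma exists_minUnsat_subset {S : ClauseSet} (h : unsat S) : ∃ M ⊆ S, minUnsat M := by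
  classical
  induction S using Finset.strongInduction with
  | _ S ih =>
    by_cases hmin : ∀ G ⊂ S, ¬ unsat G
    · exact ⟨S, Finset.Subset.refl S, h, hmin⟩
    · push_neg at hmin
      rcases hmin with ⟨G, hGS, hG⟩
      rcases ih G hGS hG with ⟨M, hMG, hM⟩
      exact ⟨M, hMG.trans hGS.subset, hM⟩

lemma two_pow_ge {m : ℕ} (h : 2 ≤ m) : m + 2 ≤ 2 ^ m := by
  induction m with
  | zero => omega
  | succ k ih =>
    rcases Nat.lt_or_ge k 2 with hk | hk
    · interval_cases k
      · omega
      · norm_num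
    · have := ih hk
      have h2 : 2 ^ (k + 1) = 2 ^ k + 2 ^ k := by ring
      omega

lemma two_pow_le {m : ℕ} (h : 2 ^ m ≤ m + 1) : m ≤ 1 := by
  by_contra hm
  push_neg at hm
  have := two_pow_ge (m := m) (by omega)
  omega

/-- There is a variable occurring in exactly two clauses. -/
theorem exists_occ2 {F : ClauseSet} (hs : saturatedMU F) (hdef : F.card = (vars F).card + 1)
    (hn : (vars F).Nonempty) :
    ∃ v ∈ vars F, ∃ C₁ ∈ F, ∃ C₂ ∈ F, (v, true) ∈ C₁ ∧ (v, false) ∈ C₂ ∧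
      ∀ D ∈ F, D ≠ C₁ → D ≠ C₂ → v ∉ varsC D := by
  classical
  obtain ⟨v, hv, hmax⟩ := Finset.exists_max_image (vars F) (fun v => (frest v F).card) hn
  set Fr := frest v F with hFr
  set S := F.filter (fun C => v ∈ varsC C) with hS
  have hvnotinFr : ∀ C ∈ Fr, v ∉ varsC C := fun C hC => (mem_frest.mp hC).2
  have hvnotvarsFr : v ∉ vars Fr := by
    intro hmem
    rcases mem_vars.mp hmem with ⟨C, hC, hvC⟩
    exact hvnotinFr C hC hvC
  have hScompl : ∀ C ∈ F, (C ∈ S ↔ C ∉ Fr) := by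
    intro C hC
    constructor
    · intro h1 h2
      exact (mem_frest.mp h2).2 (Finset.mem_filter.mp h1).2
    · intro h1
      refine Finset.mem_filter.mpr ⟨hC, ?_⟩
      by_contra h2
      exact h1 (mem_frest.mpr ⟨hC, h2⟩)
  have hSne : S.Nonempty := by
    rcases hs.1.both_signs hv true with ⟨C, hC, hmem⟩
    exact ⟨C, Finset.mem_filter.mpr ⟨hC, mem_varsC_of_mem hmem⟩⟩
  have hcards : S.card + Fr.card = F.card := by
    have := Finset.card_filter_add_card_filter_not (s := F) (p := fun C => v ∈ varsC C)
    simpa [hS, hFr, frest] using this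
  have hW : Fr.card = (vars Fr).card := by
    rcases Finset.eq_empty_or_nonempty Fr with he | hne
    · rw [he]; simp [vars]
    · exact (frest_tight hs hdef v hv hne).1.2.2.2
  have hFrprop : Fr ⊂ F := by
    refine Finset.ssubset_iff_subset_ne.mpr ⟨Finset.filter_subset _ _, ?_⟩
    intro heq
    rcases hSne with ⟨C, hC⟩
    have hCF := (Finset.mem_filter.mp hC).1
    have : C ∉ Fr := (hScompl C hCF).mp hC
    rw [heq] at this
    exact this hCF
  -- all variables outside vars Fr ∪ {v} have the same rest-set
  have hFru : ∀ u ∈ vars F, u ∉ vars Fr → frest u F = Fr := by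
    intro u hu huW
    by_cases huv : u = v
    · rw [huv]
    have hsub : Fr ⊆ frest u F := by
      intro C hC
      refine mem_frest.mpr ⟨(mem_frest.mp hC).1, fun huC => ?_⟩
      exact huW (mem_vars.mpr ⟨C, hC, huC⟩)
    exact (Finset.eq_of_subset_of_card_le hsub (hmax u hu)).symm
  have hDu : ∀ D ∈ S, ∀ u ∈ vars F, u ∉ vars Fr → u ∈ varsC D := by
    intro D hD u hu huW
    have hDF := (Finset.mem_filter.mp hD).1
    have hDFr : D ∉ Fr := (hScompl D hDF).mp hD
    by_contra huD
    have : D ∈ frest u F := mem_frest.mpr ⟨hDF, huD⟩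
    rw [hFru u hu huW] at this
    exact hDFr this
  set V₂ := vars F \ vars Fr with hV₂
  have hvV₂ : v ∈ V₂ := Finset.mem_sdiff.mpr ⟨hv, hvnotvarsFr⟩
  have hvarsFrsub : vars Fr ⊆ vars F := vars_mono (Finset.filter_subset _ _)
  have hV₂card : V₂.card = (vars F).card - (vars Fr).card := Finset.card_sdiff_of_subset hvarsFrsub
  -- b₀ satisfies Fr
  obtain ⟨b₀, hb₀⟩ := hs.1.sat_of_ssubset hFrprop
  -- the injection from subsets of V₂ into S
  have hfals : ∀ T ∈ V₂.powerset, ∃ D, D ∈ S ∧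
      ∀ y ∈ D, Lit.eval (fun u => if u ∈ T then !(b₀ u) else b₀ u) y = false := by
    intro T hT
    set a := fun u => if u ∈ T then !(b₀ u) else b₀ u with ha
    have haFr : satisfies a Fr := by
      intro C hC
      refine (clause_sat_congr (a := a) (b := b₀) ?_).mpr (hb₀ C hC)
      intro w hw
      have hwFr : w ∈ vars Fr := mem_vars.mpr ⟨C, hC, hw⟩
      have : w ∉ T := by
        intro hwT
        exact (Finset.mem_sdiff.mp ((Finset.mem_powerset.mp hT) hwT)).2 hwFr
      simp [ha, this]
    have : ¬ satisfies a F := fun hsf => hs.1.1 ⟨a, hsf⟩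
    rw [satisfies] at this
    push_neg at this
    rcases this with ⟨D, hDF, hDns⟩
    refine ⟨D, ?_, ?_⟩
    · rw [hScompl D hDF]
      intro hDFr
      exact hDns (haFr D hDFr)
    · intro y hy
      rcases Bool.eq_false_or_eq_true (Lit.eval a y) with h1 | h1
      · exact absurd ⟨y, hy, h1⟩ hDns
      · exact h1
  have hcardle : V₂.powerset.card ≤ S.card := by
    apply Finset.card_le_card_of_injOn (fun T => if hT : T ∈ V₂.powerset then (hfals T hT).choose else ∅)
    · intro T hT
      rw [Finset.mem_coe] at hT ⊢
      simp only [dif_pos hT]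
      exact ((hfals T hT).choose_spec).1
    · intro T hT T' hT' heq
      simp only [Finset.mem_coe] at hT hT'
      simp only [dif_pos hT, dif_pos hT'] at heq
      by_contra hne
      have : ∃ u, (u ∈ T ∧ u ∉ T') ∨ (u ∈ T' ∧ u ∉ T) := by
        by_contra hno
        push_neg at hno
        apply hne
        ext u
        constructor
        · intro h1; exact (hno u).1 h1
        · intro h1; exact (hno u).2 h1
      rcases this with ⟨u, hu⟩
      have huV₂ : u ∈ V₂ := by
        rcases hu with ⟨h1, _⟩ | ⟨h1, _⟩
        · exact Finset.mem_powerset.mp hT h1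
        · exact Finset.mem_powerset.mp hT' h1
      rcases Finset.mem_sdiff.mp huV₂ with ⟨huF, huFr⟩
      set D := (hfals T hT).choose with hD
      have hspec := (hfals T hT).choose_spec
      have hspec' := (hfals T' hT').choose_spec
      have huD : u ∈ varsC D := hDu D hspec.1 u huF huFr
      rcases mem_varsC.mp huD with ⟨x, hxD, hxu⟩
      have e1 := hspec.2 x hxD
      have e2 := hspec'.2 x (heq ▸ hxD)
      rw [eval_false_iff] at e1 e2
      have e1' : (if u ∈ T then !(b₀ u) else b₀ u) = !x.2 := by rw [← hxu]; exact e1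
      have e2' : (if u ∈ T' then !(b₀ u) else b₀ u) = !x.2 := by rw [← hxu]; exact e2
      have heval : (if u ∈ T then !(b₀ u) else b₀ u) = (if u ∈ T' then !(b₀ u) else b₀ u) := by
        rw [e1', e2']
      rcases hu with ⟨h1, h2⟩ | ⟨h1, h2⟩ <;> simp [h1, h2] at heval
  rw [Finset.card_powerset] at hcardle
  have hV₂pos : 1 ≤ V₂.card := Finset.card_pos.mpr ⟨v, hvV₂⟩
  have hScard : S.card = 2 ∧ V₂.card = 1 := by
    have h2 : 2 ^ V₂.card ≤ V₂.card + 1 := by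
      have : S.card = V₂.card + 1 := by
        have hfr := hW
        have := hV₂card
        omega
      omega
    have := two_pow_le h2
    constructor <;> omega
  -- extract the two clauses
  rcases hs.1.both_signs hv true with ⟨C₁, hC₁, hm₁⟩
  rcases hs.1.both_signs hv false with ⟨C₂, hC₂, hm₂⟩
  have hC₁S : C₁ ∈ S := Finset.mem_filter.mpr ⟨hC₁, mem_varsC_of_mem hm₁⟩
  have hC₂S : C₂ ∈ S := Finset.mem_filter.mpr ⟨hC₂, mem_varsC_of_mem hm₂⟩
  have hC₁₂ : C₁ ≠ C₂ := by
    rintro rfl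
    have := hs.1.tautFree hC₁ (v, true) hm₁
    simp [Lit.comp] at this
    exact this hm₂
  have hpair : ({C₁, C₂} : ClauseSet) ⊆ S := by
    intro C hC
    rcases Finset.mem_insert.mp hC with rfl | hC
    · exact hC₁S
    · rw [Finset.mem_singleton.mp hC]; exact hC₂S
  have hSeq : S = {C₁, C₂} := by
    symm
    apply Finset.eq_of_subset_of_card_le hpair
    rw [hScard.1, Finset.card_insert_of_notMem (by simpa using hC₁₂), Finset.card_singleton]
  refine ⟨v, hv, C₁, hC₁, C₂, hC₂, hm₁, hm₂, ?_⟩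
  intro D hD hne₁ hne₂
  intro hvD
  have : D ∈ S := Finset.mem_filter.mpr ⟨hD, hvD⟩
  rw [hSeq] at this
  rcases Finset.mem_insert.mp this with rfl | h
  · exact hne₁ rfl
  · exact hne₂ (Finset.mem_singleton.mp h)
/-! ### Module 5: from an occ-2 variable to a sibling pair -/

lemma erase_var_ne {v : ℕ} {p : Bool} {C : Clause} (hm : (v, p) ∈ C) (htf : tautFree C)
    {x : Lit} (hx : x ∈ C.erase (v, p)) : x.1 ≠ v := by
  rcases Finset.mem_erase.mp hx with ⟨hne, hxC⟩
  intro hxv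
  rcases eq_or_comp_of_var_eq (show x.1 = ((v, p) : Lit).1 from hxv) with h1 | h1
  · exact hne h1
  · have := htf (v, p) hm
    rw [show Lit.comp (v, p) = (v, !p) from rfl] at this
    apply this
    rw [show ((v, !p) : Lit) = x from by rw [h1]; rfl]
    exact hxC

lemma sibling_half {F : ClauseSet} (hs : saturatedMU F) {v : ℕ} {C₁ C₂ : Clause}
    (hC₁ : C₁ ∈ F) (hC₂ : C₂ ∈ F) (p : Bool)
    (hm₁ : (v, p) ∈ C₁) (hm₂ : (v, !p) ∈ C₂)
    (honly : ∀ D ∈ F, D ≠ C₁ → D ≠ C₂ → v ∉ varsC D)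
    (hRtf : tautFree (C₁.erase (v, p) ∪ C₂.erase (v, !p))) :
    C₂.erase (v, !p) ⊆ C₁.erase (v, p) := by
  intro x hx
  by_contra hxE₁
  have hxv : x.1 ≠ v := erase_var_ne hm₂ (hs.1.tautFree hC₂) hx
  have hxC₂ : x ∈ C₂ := Finset.mem_erase.mp hx |>.2
  by_cases hxvars : x.1 ∈ varsC C₁
  · rcases mem_varsC.mp hxvars with ⟨y, hyC₁, hyx⟩
    have hyE₁ : y ∈ C₁.erase (v, p) := by
      refine Finset.mem_erase.mpr ⟨?_, hyC₁⟩
      intro heq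
      exact hxv (by rw [← hyx, heq])
    rcases eq_or_comp_of_var_eq (show x.1 = y.1 from hyx.symm) with h1 | h1
    · exact hxE₁ (h1 ▸ hyE₁)
    · have hxcomp : x.comp ∈ C₁.erase (v, p) := by
        rw [show x.comp = y from by rw [h1, comp_comp]]
        exact hyE₁
      exact hRtf x (Finset.mem_union_right _ hx) (Finset.mem_union_left _ hxcomp)
  · have hsat := hs.2 C₁ hC₁ x hxvars
    rw [unsat, not_not] at hsat
    rcases hsat with ⟨a, ha⟩
    have haer : satisfies a (F.erase C₁) := satisfies_mono (Finset.subset_insert _ _) ha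
    have hnotC₁ := hs.1.not_sat_clause hC₁ haer
    have hxtrue : Lit.eval a x = true := by
      rcases ha _ (Finset.mem_insert_self _ _) with ⟨z, hz, hzev⟩
      rcases Finset.mem_insert.mp hz with rfl | hzC₁
      · exact hzev
      · exact absurd ⟨z, hzC₁, hzev⟩ hnotC₁
    apply hs.1.not_sat_self (Function.update a v p)
    intro D hD
    rcases eq_or_ne D C₁ with rfl | hne₁
    · exact ⟨(v, p), hm₁, by rw [eval_true_iff]; simp⟩
    rcases eq_or_ne D C₂ with rfl | hne₂
    · refine ⟨x, hxC₂, ?_⟩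
      rw [← hxtrue]
      exact (eval_congr (by simp [Function.update, hxv])).symm
    · have hvD := honly D hD hne₁ hne₂
      rcases haer D (Finset.mem_erase.mpr ⟨hne₁, hD⟩) with ⟨z, hz, hzev⟩
      refine ⟨z, hz, ?_⟩
      rw [← hzev]
      refine (eval_congr ?_).symm
      simp only [Function.update]
      have : z.1 ≠ v := fun hzv => hvD (hzv ▸ mem_varsC_of_mem hz)
      simp [this]

theorem exists_sibling {F : ClauseSet} (hs : saturatedMU F)
    (hdef : F.card = (vars F).card + 1) (hn : (vars F).Nonempty) :
    ∃ C : Clause, ∃ w, w ∉ varsC C ∧ insert (w, true) C ∈ F ∧ insert (w, false) C ∈ F := by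
  classical
  obtain ⟨v, hv, C₁, hC₁, C₂, hC₂, hm₁, hm₂, honly⟩ := exists_occ2 hs hdef hn
  set E₁ := C₁.erase (v, true) with hE₁
  set E₂ := C₂.erase (v, false) with hE₂
  set R := E₁ ∪ E₂ with hR
  have hC₁₂ : C₁ ≠ C₂ := by
    rintro rfl
    have := hs.1.tautFree hC₁ (v, true) hm₁
    rw [show Lit.comp (v, true) = (v, false) from rfl] at this
    exact this hm₂
  have hvE₁ : ∀ x ∈ E₁, x.1 ≠ v := fun x hx => erase_var_ne hm₁ (hs.1.tautFree hC₁) hx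
  have hvE₂ : ∀ x ∈ E₂, x.1 ≠ v := fun x hx => erase_var_ne hm₂ (hs.1.tautFree hC₂) hx
  have hvR : ∀ x ∈ R, x.1 ≠ v := by
    intro x hx
    rcases Finset.mem_union.mp hx with h | h
    · exact hvE₁ x h
    · exact hvE₂ x h
  -- the DP-result is unsatisfiable
  have hMunsat : unsat (insert R ((F.erase C₁).erase C₂)) := by
    rintro ⟨a, ha⟩
    rcases ha R (Finset.mem_insert_self _ _) with ⟨y, hyR, hyev⟩
    have hyv : y.1 ≠ v := hvR y hyR
    have main : ∀ q : Bool, y ∈ (if q then C₁ else C₂) → False := by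
      intro q hyC
      apply hs.1.not_sat_self (Function.update a v (!q))
      intro D hD
      rcases eq_or_ne D C₁ with rfl | hne₁
      · cases q
        · exact ⟨(v, true), hm₁, by rw [eval_true_iff]; simp⟩
        · refine ⟨y, by simpa using hyC, ?_⟩
          rw [← hyev]; exact (eval_congr (by simp [Function.update, hyv])).symm
      rcases eq_or_ne D C₂ with rfl | hne₂
      · cases q
        · refine ⟨y, by simpa using hyC, ?_⟩
          rw [← hyev]; exact (eval_congr (by simp [Function.update, hyv])).symm
        · exact ⟨(v, false), hm₂, by rw [eval_true_iff]; simp⟩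
      · have hvD := honly D hD hne₁ hne₂
        rcases ha D (Finset.mem_insert_of_mem (Finset.mem_erase.mpr ⟨hne₂,
            Finset.mem_erase.mpr ⟨hne₁, hD⟩⟩)) with ⟨z, hz, hzev⟩
        refine ⟨z, hz, ?_⟩
        rw [← hzev]
        refine (eval_congr ?_).symm
        have : z.1 ≠ v := fun hzv => hvD (hzv ▸ mem_varsC_of_mem hz)
        simp [Function.update, this]
    rcases Finset.mem_union.mp hyR with h | h
    · exact main true (by simpa using Finset.mem_erase.mp h |>.2)
    · exact main false (by simpa using Finset.mem_erase.mp h |>.2)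
  -- R is complement-free
  have hRtf : tautFree R := by
    rcases exists_minUnsat_subset hMunsat with ⟨M₀, hM₀sub, hM₀⟩
    have hRM₀ : R ∈ M₀ := by
      by_contra hRM₀
      have hsub : M₀ ⊆ (F.erase C₁).erase C₂ := by
        intro D hD
        rcases Finset.mem_insert.mp (hM₀sub hD) with rfl | h
        · exact absurd hD hRM₀
        · exact h
      have hss : (F.erase C₁).erase C₂ ⊂ F := by
        refine Finset.ssubset_iff_subset_ne.mpr ⟨(Finset.erase_subset _ _).trans (Finset.erase_subset _ _), ?_⟩
        intro heq
        have : C₁ ∈ (F.erase C₁).erase C₂ := heq.symm ▸ hC₁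
        exact (Finset.mem_erase.mp ((Finset.mem_erase.mp this).2)).1 rfl
      rcases hs.1.sat_of_ssubset hss with ⟨a, ha⟩
      exact hM₀.1 ⟨a, satisfies_mono hsub ha⟩
    exact hM₀.tautFree hRM₀
  have h21 : E₂ ⊆ E₁ := by
    have := sibling_half hs hC₁ hC₂ true hm₁ (by simpa using hm₂) honly
    simp only [show ((v, !true) : Lit) = (v, false) from rfl] at this
    exact this hRtf
  have h12 : E₁ ⊆ E₂ := by
    have := sibling_half hs hC₂ hC₁ false hm₂ (by simpa using hm₁)
      (fun D hD h1 h2 => honly D hD h2 h1)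
    simp only [show ((v, !false) : Lit) = (v, true) from rfl] at this
    apply this
    rw [hR, Finset.union_comm] at hRtf
    exact hRtf
  have hEeq : E₁ = E₂ := Finset.Subset.antisymm h12 h21
  refine ⟨E₁, v, ?_, ?_, ?_⟩
  · intro hvvars
    rcases mem_varsC.mp hvvars with ⟨x, hx, hxv⟩
    exact hvE₁ x hx hxv
  · rw [hE₁, Finset.insert_erase hm₁]
    exact hC₁
  · rw [hEeq, hE₂, Finset.insert_erase hm₂]
    exact hC₂
/-! ### Module 6: sibling contraction -/

lemma clause_sat_mono {a : ℕ → Bool} {D D' : Clause} (h : Clause.sat a D) (hsub : D ⊆ D') :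
    Clause.sat a D' := by
  rcases h with ⟨x, hx, hev⟩
  exact ⟨x, hsub hx, hev⟩

section Contract

variable {F : ClauseSet} {C : Clause} {w : ℕ}

lemma sat_contract_core {a : ℕ → Bool} (h1 : Clause.sat a (insert (w, true) C))
    (h2 : Clause.sat a (insert (w, false) C)) : Clause.sat a C := by
  rcases h1 with ⟨x, hx, hevx⟩
  rcases Finset.mem_insert.mp hx with rfl | hxC
  · rcases h2 with ⟨y, hy, hevy⟩
    rcases Finset.mem_insert.mp hy with rfl | hyC
    · exfalso
      rw [eval_true_iff] at hevx hevy
      simp at hevx hevy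
      rw [hevx] at hevy
      simp at hevy
    · exact ⟨y, hyC, hevy⟩
  · exact ⟨x, hxC, hevx⟩

theorem contract_smu1 (hs : saturatedMU F) (hdef : F.card = (vars F).card + 1)
    (hw : w ∉ varsC C) (h1 : insert (w, true) C ∈ F) (h2 : insert (w, false) C ∈ F) :
    ∀ F' : ClauseSet, F' = insert C ((F.erase (insert (w, true) C)).erase (insert (w, false) C)) →
    saturatedMU F' ∧ F'.card = (vars F').card + 1 ∧ (vars F').card + 1 = (vars F).card ∧
      C ∈ F' ∧ w ∉ vars F' ∧
      F = insert (insert (w, true) C) (insert (insert (w, false) C) (F'.erase C)) := by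
  intro F' hF'
  classical
  set C₁ := insert ((w, true) : Lit) C with hC₁def
  set C₂ := insert ((w, false) : Lit) C with hC₂def
  have hwt : ((w, true) : Lit) ∉ C := fun h => hw (mem_varsC_of_mem h)
  have hwf : ((w, false) : Lit) ∉ C := fun h => hw (mem_varsC_of_mem h)
  have hC₁₂ : C₁ ≠ C₂ := by
    intro heq
    have : ((w, true) : Lit) ∈ C₂ := heq ▸ Finset.mem_insert_self _ _
    rcases Finset.mem_insert.mp this with h | h
    · simp at h
    · exact hwt h
  have hCF : C ∉ F := by
    intro hC
    exact hs.1.incomp hC h1 (by intro heq; exact hwt (heq ▸ Finset.mem_insert_self _ _))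
      (Finset.subset_insert _ _)
  have hmemF' : ∀ D, D ∈ F' ↔ D = C ∨ (D ∈ F ∧ D ≠ C₁ ∧ D ≠ C₂) := by
    intro D
    rw [hF']
    simp only [Finset.mem_insert, Finset.mem_erase]
    tauto
  have hCmem : C ∈ F' := (hmemF' C).mpr (Or.inl rfl)
  have hsubC₁ : C ⊆ C₁ := Finset.subset_insert _ _
  have hsubC₂ : C ⊆ C₂ := Finset.subset_insert _ _
  -- satisfaction transfer
  have htoF : ∀ a, satisfies a F' → satisfies a F := by
    intro a ha D hD
    have hC : Clause.sat a C := ha C hCmem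
    rcases eq_or_ne D C₁ with rfl | hne₁
    · exact clause_sat_mono hC hsubC₁
    rcases eq_or_ne D C₂ with rfl | hne₂
    · exact clause_sat_mono hC hsubC₂
    · exact ha D ((hmemF' D).mpr (Or.inr ⟨hD, hne₁, hne₂⟩))
  have hfromF : ∀ a, satisfies a F → satisfies a F' := by
    intro a ha D hD
    rcases (hmemF' D).mp hD with rfl | ⟨hDF, _, _⟩
    · exact sat_contract_core (ha C₁ h1) (ha C₂ h2)
    · exact ha D hDF
  have hunsat : unsat F' := by
    rintro ⟨a, ha⟩
    exact hs.1.1 ⟨a, htoF a ha⟩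
  have heraseC : F'.erase C ⊆ F.erase C₁ := by
    intro D hD
    rcases Finset.mem_erase.mp hD with ⟨hne, hDF'⟩
    rcases (hmemF' D).mp hDF' with rfl | ⟨hDF, hne₁, _⟩
    · exact absurd rfl hne
    · exact Finset.mem_erase.mpr ⟨hne₁, hDF⟩
  have heraseC' : F'.erase C ⊆ F.erase C₂ := by
    intro D hD
    rcases Finset.mem_erase.mp hD with ⟨hne, hDF'⟩
    rcases (hmemF' D).mp hDF' with rfl | ⟨hDF, _, hne₂⟩
    · exact absurd rfl hne
    · exact Finset.mem_erase.mpr ⟨hne₂, hDF⟩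
  have hMU : minUnsat F' := by
    apply minUnsat_of_erase_sat hunsat
    intro D hD
    rcases (hmemF' D).mp hD with rfl | ⟨hDF, hne₁, hne₂⟩
    · rcases hs.1.sat_erase h1 with ⟨a, ha⟩
      exact ⟨a, satisfies_mono heraseC ha⟩
    · rcases hs.1.sat_erase hDF with ⟨a, ha⟩
      refine ⟨a, ?_⟩
      intro D' hD'
      rcases Finset.mem_erase.mp hD' with ⟨hne', hD'F'⟩
      rcases (hmemF' D').mp hD'F' with rfl | ⟨hD'F, hne₁', hne₂'⟩
      · exact sat_contract_core (ha C₁ (Finset.mem_erase.mpr ⟨Ne.symm hne₁, h1⟩))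
          (ha C₂ (Finset.mem_erase.mpr ⟨Ne.symm hne₂, h2⟩))
      · exact ha D' (Finset.mem_erase.mpr ⟨fun hh => hne' (hh ▸ rfl), hD'F⟩)
  have hsat' : saturatedMU F' := by
    refine ⟨hMU, ?_⟩
    intro D hD x hx
    rw [unsat, not_not]
    rcases (hmemF' D).mp hD with rfl | ⟨hDF, hne₁, hne₂⟩
    · -- D = C
      by_cases hxw : x.1 = w
      · -- use minimality of F at C₁ or C₂
        rcases Bool.eq_false_or_eq_true x.2 with hx2 | hx2
        · -- x = (w, true): use erase C₂
          rcases hs.1.sat_erase h2 with ⟨a, ha⟩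
          have hns := hs.1.not_sat_clause h2 ha
          have haw : a w = true := by
            by_contra hcon
            exact hns ⟨(w, false), Finset.mem_insert_self _ _,
              by rw [eval_true_iff]; simpa using eq_false_of_ne_true hcon⟩
          refine ⟨a, ?_⟩
          intro D' hD'
          rcases Finset.mem_insert.mp hD' with rfl | hD'
          · refine ⟨x, Finset.mem_insert_self _ _, ?_⟩
            rw [eval_true_iff, hxw, hx2, haw]
          · exact satisfies_mono heraseC' ha D' hD'
        · -- x = (w, false): use erase C₁
          rcases hs.1.sat_erase h1 with ⟨a, ha⟩
          have hns := hs.1.not_sat_clause h1 ha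
          have haw : a w = false := by
            by_contra hcon
            exact hns ⟨(w, true), Finset.mem_insert_self _ _,
              by rw [eval_true_iff]; simpa using eq_true_of_ne_false hcon⟩
          refine ⟨a, ?_⟩
          intro D' hD'
          rcases Finset.mem_insert.mp hD' with rfl | hD'
          · refine ⟨x, Finset.mem_insert_self _ _, ?_⟩
            rw [eval_true_iff, hxw, hx2, haw]
          · exact satisfies_mono heraseC ha D' hD'
      · -- x.1 ∉ varsC C₁: use saturation of F at C₁
        have hxC₁ : x.1 ∉ varsC C₁ := by
          intro hmem
          rcases mem_varsC.mp hmem with ⟨y, hy, hyx⟩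
          rcases Finset.mem_insert.mp hy with rfl | hyC
          · exact hxw hyx.symm
          · exact hx (mem_varsC.mpr ⟨y, hyC, hyx⟩)
        have := hs.2 C₁ h1 x hxC₁
        rw [unsat, not_not] at this
        rcases this with ⟨a, ha⟩
        have haer : satisfies a (F.erase C₁) := satisfies_mono (Finset.subset_insert _ _) ha
        have hns := hs.1.not_sat_clause h1 haer
        have hxtrue : Lit.eval a x = true := by
          rcases ha _ (Finset.mem_insert_self _ _) with ⟨z, hz, hzev⟩
          rcases Finset.mem_insert.mp hz with rfl | hzC
          · exact hzev
          · exact absurd ⟨z, hzC, hzev⟩ hns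
        refine ⟨a, ?_⟩
        intro D' hD'
        rcases Finset.mem_insert.mp hD' with rfl | hD'
        · exact ⟨x, Finset.mem_insert_self _ _, hxtrue⟩
        · exact satisfies_mono heraseC haer D' hD'
    · -- D ∈ F
      have := hs.2 D hDF x hx
      rw [unsat, not_not] at this
      rcases this with ⟨a, ha⟩
      have haer : satisfies a (F.erase D) := satisfies_mono (Finset.subset_insert _ _) ha
      refine ⟨a, ?_⟩
      intro D' hD'
      rcases Finset.mem_insert.mp hD' with rfl | hD'
      · exact ha _ (Finset.mem_insert_self _ _)
      · rcases Finset.mem_erase.mp hD' with ⟨hne', hD'F'⟩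
        rcases (hmemF' D').mp hD'F' with rfl | ⟨hD'F, hne₁', hne₂'⟩
        · refine sat_contract_core (haer C₁ (Finset.mem_erase.mpr ⟨Ne.symm hne₁, h1⟩))
            (haer C₂ (Finset.mem_erase.mpr ⟨Ne.symm hne₂, h2⟩))
        · exact haer D' (Finset.mem_erase.mpr ⟨fun hh => hne' (hh ▸ rfl), hD'F⟩)
  -- cardinalities
  have hcard : F'.card = F.card - 1 := by
    rw [hF']
    rw [Finset.card_insert_of_notMem (by
      intro hmem
      exact hCF ((Finset.mem_erase.mp (Finset.mem_erase.mp hmem).2).2))]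
    rw [Finset.card_erase_of_mem (Finset.mem_erase.mpr ⟨fun h => hC₁₂ h.symm, h2⟩),
      Finset.card_erase_of_mem h1]
    have : 2 ≤ F.card := by
      have : ({C₁, C₂} : ClauseSet) ⊆ F := by
        intro D hD
        rcases Finset.mem_insert.mp hD with rfl | hD
        · exact h1
        · rw [Finset.mem_singleton.mp hD]; exact h2
      calc 2 = ({C₁, C₂} : ClauseSet).card := by
            rw [Finset.card_insert_of_notMem (by simpa using hC₁₂), Finset.card_singleton]
        _ ≤ F.card := Finset.card_le_card this
    omega
  have hvsub : vars F' ⊆ vars F := by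
    intro z hz
    rcases mem_vars.mp hz with ⟨D, hD, hzD⟩
    rcases (hmemF' D).mp hD with heq | ⟨hDF, _, _⟩
    · rw [heq] at hzD
      exact mem_vars.mpr ⟨C₁, h1, (varsC_erase_subset C₁ (w, true)) (by
          rw [show C₁.erase (w, true) = C from by rw [hC₁def, Finset.erase_insert hwt]]
          exact hzD)⟩
    · exact mem_vars.mpr ⟨D, hDF, hzD⟩
  have hvsup : vars F ⊆ insert w (vars F') := by
    intro z hz
    rcases mem_vars.mp hz with ⟨E, hE, hzE⟩
    by_cases hzw : z = w
    · exact hzw ▸ Finset.mem_insert_self _ _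
    refine Finset.mem_insert_of_mem ?_
    rcases eq_or_ne E C₁ with rfl | hne₁
    · rcases mem_varsC.mp hzE with ⟨y, hy, hyz⟩
      rcases Finset.mem_insert.mp hy with rfl | hyC
      · exact absurd hyz.symm hzw
      · exact mem_vars.mpr ⟨C, hCmem, mem_varsC.mpr ⟨y, hyC, hyz⟩⟩
    rcases eq_or_ne E C₂ with rfl | hne₂
    · rcases mem_varsC.mp hzE with ⟨y, hy, hyz⟩
      rcases Finset.mem_insert.mp hy with rfl | hyC
      · exact absurd hyz.symm hzw
      · exact mem_vars.mpr ⟨C, hCmem, mem_varsC.mpr ⟨y, hyC, hyz⟩⟩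
    · exact mem_vars.mpr ⟨E, (hmemF' E).mpr (Or.inr ⟨hE, hne₁, hne₂⟩), hzE⟩
  have hwF : w ∈ vars F := mem_vars.mpr ⟨C₁, h1, mem_varsC_of_mem (Finset.mem_insert_self _ _)⟩
  have hwnot : w ∉ vars F' := by
    intro hmem
    have hveq : vars F' = vars F := by
      apply Finset.Subset.antisymm hvsub
      intro z hz
      rcases Finset.mem_insert.mp (hvsup hz) with rfl | h
      · exact hmem
      · exact h
    have htarsi := T2nat hMU
    rw [hveq, hcard, hdef] at htarsi
    omega
  have hveq : vars F' = (vars F).erase w := by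
    apply Finset.Subset.antisymm
    · intro z hz
      exact Finset.mem_erase.mpr ⟨fun hh => hwnot (hh ▸ hz), hvsub hz⟩
    · intro z hz
      rcases Finset.mem_erase.mp hz with ⟨hne, hzF⟩
      rcases Finset.mem_insert.mp (hvsup hzF) with rfl | h
      · exact absurd rfl hne
      · exact h
  have hvcard : (vars F').card + 1 = (vars F).card := by
    rw [hveq, Finset.card_erase_of_mem hwF]
    have : 1 ≤ (vars F).card := Finset.card_pos.mpr ⟨w, hwF⟩
    omega
  refine ⟨hsat', by omega, hvcard, hCmem, hwnot, ?_⟩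
  have hCnot : C ∉ (F.erase C₁).erase C₂ := fun hmem =>
    hCF (Finset.mem_erase.mp (Finset.mem_erase.mp hmem).2).2
  have her : F'.erase C = (F.erase C₁).erase C₂ := by
    rw [hF', Finset.erase_insert hCnot]
  rw [her]
  ext D
  simp only [Finset.mem_insert, Finset.mem_erase]
  constructor
  · intro hD
    rcases eq_or_ne D C₁ with rfl | hne₁
    · exact Or.inl rfl
    rcases eq_or_ne D C₂ with rfl | hne₂
    · exact Or.inr (Or.inl rfl)
    · exact Or.inr (Or.inr ⟨hne₂, hne₁, hD⟩)
  · rintro (rfl | rfl | ⟨_, _, hD⟩)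
    · exact h1
    · exact h2
    · exact hD

end Contract
/-! ### Module 7: tree structure -/

/-- Clause-sets arising from full binary trees with distinct variables. -/
inductive IsTree : ClauseSet → Prop
  | base : IsTree {∅}
  | split (v : ℕ) (F1 F2 : ClauseSet) :
      v ∉ vars F1 → v ∉ vars F2 → vars F1 ∩ vars F2 = ∅ →
      IsTree F1 → IsTree F2 →
      IsTree (F1.image (insert (v, true)) ∪ F2.image (insert (v, false)))

lemma isTree_nonempty {T : ClauseSet} (h : IsTree T) : T.Nonempty := by
  induction h with
  | base => exact ⟨∅, Finset.mem_singleton_self _⟩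
  | split v F1 F2 _ _ _ _ _ ih1 _ =>
    rcases ih1 with ⟨C, hC⟩
    exact ⟨insert (v, true) C, Finset.mem_union_left _ (Finset.mem_image_of_mem _ hC)⟩

lemma insert_lit_inj {v : ℕ} {p : Bool} {D D' : Clause}
    (hD : v ∉ varsC D) (hD' : v ∉ varsC D')
    (heq : insert ((v, p) : Lit) D = insert (v, p) D') : D = D' := by
  have h1 : ((v, p) : Lit) ∉ D := fun h => hD (mem_varsC_of_mem h)
  have h2 : ((v, p) : Lit) ∉ D' := fun h => hD' (mem_varsC_of_mem h)
  rw [← Finset.erase_insert h1, ← Finset.erase_insert h2, heq]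

lemma varsC_image_insert_subset {G : ClauseSet} {v : ℕ} {p : Bool} :
    vars (G.image (insert (v, p))) ⊆ insert v (vars G) := by
  intro z hz
  rcases mem_vars.mp hz with ⟨D, hD, hzD⟩
  rcases Finset.mem_image.mp hD with ⟨D', hD', rfl⟩
  rcases mem_varsC.mp hzD with ⟨x, hx, rfl⟩
  rcases Finset.mem_insert.mp hx with rfl | hxD'
  · exact Finset.mem_insert_self _ _
  · exact Finset.mem_insert_of_mem (mem_vars.mpr ⟨D', hD', mem_varsC_of_mem hxD'⟩)

lemma mem_vars_image_insert {G : ClauseSet} {v : ℕ} {p : Bool} (h : G.Nonempty) :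
    v ∈ vars (G.image (insert (v, p))) := by
  rcases h with ⟨D, hD⟩
  exact mem_vars.mpr ⟨insert (v, p) D, Finset.mem_image_of_mem _ hD,
    mem_varsC_of_mem (Finset.mem_insert_self _ _)⟩

lemma vars_subset_image_insert {G : ClauseSet} {v : ℕ} {p : Bool} :
    vars G ⊆ vars (G.image (insert (v, p))) := by
  intro z hz
  rcases mem_vars.mp hz with ⟨D, hD, hzD⟩
  rcases mem_varsC.mp hzD with ⟨x, hx, rfl⟩
  exact mem_vars.mpr ⟨insert (v, p) D, Finset.mem_image_of_mem _ hD,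
    mem_varsC_of_mem (Finset.mem_insert_of_mem hx)⟩

lemma image_insert_erase {G : ClauseSet} {v : ℕ} {p : Bool} {C₀ : Clause}
    (hv : v ∉ vars G) (hC₀ : C₀ ∈ G) :
    (G.erase C₀).image (insert ((v, p) : Lit)) = (G.image (insert (v, p))).erase (insert (v, p) C₀) := by
  ext D
  simp only [Finset.mem_image, Finset.mem_erase]
  constructor
  · rintro ⟨D', ⟨hne, hD'G⟩, rfl⟩
    refine ⟨?_, D', hD'G, rfl⟩
    intro heq
    exact hne (insert_lit_inj (fun h => hv (mem_vars.mpr ⟨D', hD'G, h⟩))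
      (fun h => hv (mem_vars.mpr ⟨C₀, hC₀, h⟩)) heq)
  · rintro ⟨hne, D', hD'G, rfl⟩
    exact ⟨D', ⟨fun heq => hne (by rw [heq]), hD'G⟩, rfl⟩

lemma isTree_expand {T : ClauseSet} (h : IsTree T) :
    ∀ C ∈ T, ∀ w : ℕ, w ∉ vars T →
      IsTree (insert (insert ((w, true) : Lit) C) (insert (insert ((w, false) : Lit) C) (T.erase C))) := by
  induction h with
  | base =>
    intro C hC w _
    rw [Finset.mem_singleton.mp hC]
    have : insert (insert ((w, true) : Lit) ∅) (insert (insert ((w, false) : Lit) ∅) (({∅} : ClauseSet).erase ∅))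
        = ({∅} : ClauseSet).image (insert (w, true)) ∪ ({∅} : ClauseSet).image (insert (w, false)) := by
      simp
    rw [this]
    exact IsTree.split w {∅} {∅} (by simp [vars, varsC]) (by simp [vars, varsC])
      (by simp [vars, varsC]) IsTree.base IsTree.base
  | split v F1 F2 hv1 hv2 hdisj h1 h2 ih1 ih2 =>
    intro C hC w hw
    have hne1 : F1.Nonempty := isTree_nonempty h1
    have hne2 : F2.Nonempty := isTree_nonempty h2
    have hsub1 : vars F1 ⊆ vars (F1.image (insert ((v, true) : Lit)) ∪ F2.image (insert (v, false))) := by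
      refine Finset.Subset.trans (vars_subset_image_insert (v := v) (p := true)) ?_
      rw [vars_union]; exact Finset.subset_union_left
    have hsub2 : vars F2 ⊆ vars (F1.image (insert ((v, true) : Lit)) ∪ F2.image (insert (v, false))) := by
      refine Finset.Subset.trans (vars_subset_image_insert (v := v) (p := false)) ?_
      rw [vars_union]; exact Finset.subset_union_right
    have hw1 : w ∉ vars F1 := fun hmem => hw (hsub1 hmem)
    have hw2 : w ∉ vars F2 := fun hmem => hw (hsub2 hmem)
    have hwv : w ≠ v := by
      rintro rfl
      exact hw ((vars_union _ _).symm ▸ Finset.mem_union_left _ (mem_vars_image_insert hne1))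
    rcases Finset.mem_union.mp hC with hCm | hCm
    · rcases Finset.mem_image.mp hCm with ⟨C₀, hC₀, rfl⟩
      have hE1 := ih1 C₀ hC₀ w hw1
      set E1 := insert (insert ((w, true) : Lit) C₀) (insert (insert ((w, false) : Lit) C₀) (F1.erase C₀)) with hE1def
      have hvarsE1 : vars E1 ⊆ insert w (vars F1) := by
        intro z hz
        rcases mem_vars.mp hz with ⟨D, hD, hzD⟩
        rcases Finset.mem_insert.mp hD with rfl | hD
        · rcases mem_varsC.mp hzD with ⟨x, hx, rfl⟩
          rcases Finset.mem_insert.mp hx with rfl | hx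
          · exact Finset.mem_insert_self _ _
          · exact Finset.mem_insert_of_mem (mem_vars.mpr ⟨C₀, hC₀, mem_varsC_of_mem hx⟩)
        rcases Finset.mem_insert.mp hD with rfl | hD
        · rcases mem_varsC.mp hzD with ⟨x, hx, rfl⟩
          rcases Finset.mem_insert.mp hx with rfl | hx
          · exact Finset.mem_insert_self _ _
          · exact Finset.mem_insert_of_mem (mem_vars.mpr ⟨C₀, hC₀, mem_varsC_of_mem hx⟩)
        · exact Finset.mem_insert_of_mem (mem_vars.mpr ⟨D, Finset.erase_subset _ _ hD, hzD⟩)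
      have hvE1 : v ∉ vars E1 := by
        intro hmem
        rcases Finset.mem_insert.mp (hvarsE1 hmem) with heq | hmem'
        · exact hwv heq.symm
        · exact hv1 hmem'
      have hdisj' : vars E1 ∩ vars F2 = ∅ := by
        rw [Finset.eq_empty_iff_forall_notMem]
        intro z hz
        rcases Finset.mem_inter.mp hz with ⟨hz1, hz2⟩
        rcases Finset.mem_insert.mp (hvarsE1 hz1) with rfl | hz1'
        · exact hw2 hz2
        · rw [Finset.eq_empty_iff_forall_notMem] at hdisj
          exact hdisj z (Finset.mem_inter.mpr ⟨hz1', hz2⟩)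
      have htree := IsTree.split v E1 F2 hvE1 hv2 hdisj' hE1 h2
      have hCnot2 : insert ((v, true) : Lit) C₀ ∉ F2.image (insert ((v, false) : Lit)) := by
        intro hmem
        rcases Finset.mem_image.mp hmem with ⟨D, hD, heq⟩
        have : ((v, true) : Lit) ∈ insert ((v, false) : Lit) D := heq ▸ Finset.mem_insert_self _ _
        rcases Finset.mem_insert.mp this with h | h
        · simp at h
        · exact hv2 (mem_vars.mpr ⟨D, hD, mem_varsC_of_mem h⟩)
      have hsetEq : E1.image (insert ((v, true) : Lit)) ∪ F2.image (insert ((v, false) : Lit)) =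
          insert (insert ((w, true) : Lit) (insert (v, true) C₀))
            (insert (insert ((w, false) : Lit) (insert (v, true) C₀))
              ((F1.image (insert ((v, true) : Lit)) ∪ F2.image (insert (v, false))).erase (insert (v, true) C₀))) := by
        rw [hE1def]
        rw [Finset.image_insert, Finset.image_insert]
        rw [image_insert_erase hv1 hC₀]
        rw [Finset.erase_union_distrib]
        rw [Finset.erase_eq_of_notMem hCnot2]
        rw [Finset.insert_union, Finset.insert_union]
        rw [Finset.insert_comm ((v, true) : Lit) ((w, true) : Lit) C₀]
        rw [Finset.insert_comm ((v, true) : Lit) ((w, false) : Lit) C₀]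
      rw [hsetEq] at htree
      exact htree
    · rcases Finset.mem_image.mp hCm with ⟨C₀, hC₀, rfl⟩
      have hE2 := ih2 C₀ hC₀ w hw2
      set E2 := insert (insert ((w, true) : Lit) C₀) (insert (insert ((w, false) : Lit) C₀) (F2.erase C₀)) with hE2def
      have hvarsE2 : vars E2 ⊆ insert w (vars F2) := by
        intro z hz
        rcases mem_vars.mp hz with ⟨D, hD, hzD⟩
        rcases Finset.mem_insert.mp hD with rfl | hD
        · rcases mem_varsC.mp hzD with ⟨x, hx, rfl⟩
          rcases Finset.mem_insert.mp hx with rfl | hx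
          · exact Finset.mem_insert_self _ _
          · exact Finset.mem_insert_of_mem (mem_vars.mpr ⟨C₀, hC₀, mem_varsC_of_mem hx⟩)
        rcases Finset.mem_insert.mp hD with rfl | hD
        · rcases mem_varsC.mp hzD with ⟨x, hx, rfl⟩
          rcases Finset.mem_insert.mp hx with rfl | hx
          · exact Finset.mem_insert_self _ _
          · exact Finset.mem_insert_of_mem (mem_vars.mpr ⟨C₀, hC₀, mem_varsC_of_mem hx⟩)
        · exact Finset.mem_insert_of_mem (mem_vars.mpr ⟨D, Finset.erase_subset _ _ hD, hzD⟩)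
      have hvE2 : v ∉ vars E2 := by
        intro hmem
        rcases Finset.mem_insert.mp (hvarsE2 hmem) with heq | hmem'
        · exact hwv heq.symm
        · exact hv2 hmem'
      have hdisj' : vars F1 ∩ vars E2 = ∅ := by
        rw [Finset.eq_empty_iff_forall_notMem]
        intro z hz
        rcases Finset.mem_inter.mp hz with ⟨hz1, hz2⟩
        rcases Finset.mem_insert.mp (hvarsE2 hz2) with rfl | hz2'
        · exact hw1 hz1
        · rw [Finset.eq_empty_iff_forall_notMem] at hdisj
          exact hdisj z (Finset.mem_inter.mpr ⟨hz1, hz2'⟩)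
      have htree := IsTree.split v F1 E2 hv1 hvE2 hdisj' h1 hE2
      have hCnot1 : insert ((v, false) : Lit) C₀ ∉ F1.image (insert ((v, true) : Lit)) := by
        intro hmem
        rcases Finset.mem_image.mp hmem with ⟨D, hD, heq⟩
        have : ((v, false) : Lit) ∈ insert ((v, true) : Lit) D := heq ▸ Finset.mem_insert_self _ _
        rcases Finset.mem_insert.mp this with h | h
        · simp at h
        · exact hv1 (mem_vars.mpr ⟨D, hD, mem_varsC_of_mem h⟩)
      have hsetEq : F1.image (insert ((v, true) : Lit)) ∪ E2.image (insert ((v, false) : Lit)) =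
          insert (insert ((w, true) : Lit) (insert (v, false) C₀))
            (insert (insert ((w, false) : Lit) (insert (v, false) C₀))
              ((F1.image (insert ((v, true) : Lit)) ∪ F2.image (insert (v, false))).erase (insert (v, false) C₀))) := by
        rw [hE2def]
        rw [Finset.image_insert, Finset.image_insert]
        rw [image_insert_erase hv2 hC₀]
        rw [Finset.erase_union_distrib]
        rw [Finset.erase_eq_of_notMem hCnot1]
        rw [Finset.union_insert, Finset.union_insert]
        rw [Finset.insert_comm ((v, false) : Lit) ((w, true) : Lit) C₀]
        rw [Finset.insert_comm ((v, false) : Lit) ((w, false) : Lit) C₀]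
      rw [hsetEq] at htree
      exact htree

/-- The structure theorem: saturated MU clause-sets of deficiency 1 are trees. -/
theorem smu1_isTree : ∀ (n : ℕ) (F : ClauseSet), (vars F).card = n → saturatedMU F →
    F.card = (vars F).card + 1 → IsTree F := by
  intro n
  induction n using Nat.strong_induction_on with
  | _ n ih =>
    intro F hn hs hdef
    rcases Nat.eq_zero_or_pos n with rfl | hpos
    · have hvars : vars F = ∅ := Finset.card_eq_zero.mp hn
      have hFcard : F.card = 1 := by rw [hdef, hn]
      rcases Finset.card_eq_one.mp hFcard with ⟨C, hC⟩
      have hCe : C = ∅ := by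
        rcases Finset.eq_empty_or_nonempty C with he | ⟨x, hx⟩
        · exact he
        · exfalso
          have := varsC_subset_vars (show C ∈ F from by rw [hC]; exact Finset.mem_singleton_self C)
            (mem_varsC_of_mem hx)
          rw [hvars] at this
          exact Finset.notMem_empty _ this
      rw [hC, hCe]
      exact IsTree.base
    · have hnne : (vars F).Nonempty := Finset.card_pos.mp (by omega)
      obtain ⟨C, w, hw, h1, h2⟩ := exists_sibling hs hdef hnne
      obtain ⟨hsat', hdef', hvcard, hCmem, hwnot, hFeq⟩ := contract_smu1 hs hdef hw h1 h2 _ rfl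
      have htree' : IsTree (insert C ((F.erase (insert (w, true) C)).erase (insert (w, false) C))) := by
        apply ih ((vars (insert C ((F.erase (insert (w, true) C)).erase (insert (w, false) C)))).card)
          (by omega) _ rfl hsat' hdef'
      rw [hFeq]
      exact isTree_expand htree' C hCmem w hwnot
/-! ### Module 8: the premise predicate Ψ and split decompositions -/

/-- `a` falsifies every literal of `Q`. -/
def falsifying (a : ℕ → Bool) (Q : Clause) : Prop := ∀ x ∈ Q, Lit.eval a x = false

/-- No assignment satisfies `G` while falsifying all of `Q`. -/
def Psi (G : ClauseSet) (Q : Clause) : Prop := ¬ ∃ a, satisfies a G ∧ falsifying a Q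

/-- Default falsifier of a complement-free clause. -/
def dflt (Q : Clause) : ℕ → Bool := fun u => if ((u, true) : Lit) ∈ Q then false else true

lemma lit_eta (x : Lit) : ((x.1, x.2) : Lit) = x := rfl

lemma dflt_falsifies {Q : Clause} (h : tautFree Q) : falsifying (dflt Q) Q := by
  intro x hx
  rw [eval_false_iff]
  rcases Bool.eq_false_or_eq_true x.2 with h2 | h2
  · have hxe : ((x.1, true) : Lit) = x := by rw [← h2]
    rw [h2]
    show (if ((x.1, true) : Lit) ∈ Q then false else true) = !true
    rw [if_pos (by rw [hxe]; exact hx)]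
    rfl
  · have hxc : ((x.1, true) : Lit) = x.comp := by
      rw [show x.comp = (x.1, !x.2) from rfl, h2]
      rfl
    rw [h2]
    show (if ((x.1, true) : Lit) ∈ Q then false else true) = !false
    rw [if_neg (by rw [hxc]; exact h x hx)]
    rfl

lemma dflt_falsifies_at {Q : Clause} (h : tautFree Q) {x : Lit} (hx : x ∈ Q)
    {a : ℕ → Bool} (ha : a x.1 = dflt Q x.1) : Lit.eval a x = false := by
  rw [eval_false_iff, ha, ← eval_false_iff]
  exact dflt_falsifies h x hx

lemma pureC_tautFree (G : ClauseSet) : tautFree (pureC G) := by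
  intro x hx hcx
  exact (mem_pureC.mp hx).2 (mem_pureC.mp hcx).1

lemma tautFree_mono {Q Q' : Clause} (h : Q ⊆ Q') (h' : tautFree Q') : tautFree Q :=
  fun x hx hcx => h' x (h hx) (h hcx)

lemma falsifying_mono {a : ℕ → Bool} {Q Q' : Clause} (h : Q ⊆ Q')
    (h' : falsifying a Q') : falsifying a Q := fun x hx => h' x (h hx)

lemma Psi_mono_left {G G' : ClauseSet} {Q : Clause} (h : G ⊆ G') (hp : Psi G Q) : Psi G' Q := by
  rintro ⟨a, ha, hf⟩
  exact hp ⟨a, satisfies_mono h ha, hf⟩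

lemma Psi_mono_right {G : ClauseSet} {Q Q' : Clause} (h : Q ⊆ Q') (hp : Psi G Q) : Psi G Q' := by
  rintro ⟨a, ha, hf⟩
  exact hp ⟨a, ha, falsifying_mono h hf⟩

lemma not_Psi_empty {Q : Clause} (h : tautFree Q) : ¬ Psi ∅ Q := by
  intro hp
  exact hp ⟨dflt Q, fun C hC => absurd hC (Finset.notMem_empty C), dflt_falsifies h⟩

lemma lits_var_mem {x : Lit} {G : ClauseSet} (h : x ∈ lits G) : x.1 ∈ vars G := by
  rcases mem_lits.mp h with ⟨C, hC, hx⟩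
  exact mem_vars.mpr ⟨C, hC, mem_varsC_of_mem hx⟩

section SplitCtx

variable {v : ℕ} {F1 F2 F' : ClauseSet}

/-- Clauses of `G` whose `(v,p)`-extension belongs to `F'`. -/
def sideOf (v : ℕ) (p : Bool) (G F' : ClauseSet) : ClauseSet :=
  G.filter (fun D => insert ((v, p) : Lit) D ∈ F')

lemma sideOf_subset {v : ℕ} {p : Bool} {G F'' : ClauseSet} : sideOf v p G F'' ⊆ G :=
  Finset.filter_subset _ _

lemma lits_sideOf_var {v : ℕ} {p : Bool} {G F'' : ClauseSet} {x : Lit}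
    (hx : x ∈ lits (sideOf v p G F'')) : x.1 ∈ vars G := by
  rcases mem_lits.mp hx with ⟨D, hD, hxD⟩
  exact mem_vars.mpr ⟨D, sideOf_subset hD, mem_varsC_of_mem hxD⟩

variable (hv1 : v ∉ vars F1) (hv2 : v ∉ vars F2) (hdisj : vars F1 ∩ vars F2 = ∅)
variable (hsub : F' ⊆ F1.image (insert (v, true)) ∪ F2.image (insert (v, false)))

include hv1 hv2 hsub

lemma split_mem_cases : ∀ C ∈ F',
    (∃ D ∈ sideOf v true F1 F', C = insert (v, true) D) ∨
    (∃ D ∈ sideOf v false F2 F', C = insert (v, false) D) := by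
  intro C hC
  rcases Finset.mem_union.mp (hsub hC) with h | h
  · rcases Finset.mem_image.mp h with ⟨D, hD, rfl⟩
    exact Or.inl ⟨D, Finset.mem_filter.mpr ⟨hD, hC⟩, rfl⟩
  · rcases Finset.mem_image.mp h with ⟨D, hD, rfl⟩
    exact Or.inr ⟨D, Finset.mem_filter.mpr ⟨hD, hC⟩, rfl⟩

lemma split_lits_cases : ∀ x ∈ lits F',
    (x = (v, true) ∧ (sideOf v true F1 F').Nonempty) ∨
    (x = (v, false) ∧ (sideOf v false F2 F').Nonempty) ∨
    x ∈ lits (sideOf v true F1 F') ∨ x ∈ lits (sideOf v false F2 F') := by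
  intro x hx
  rcases mem_lits.mp hx with ⟨C, hC, hxC⟩
  rcases split_mem_cases hv1 hv2 hsub C hC with ⟨D, hD, rfl⟩ | ⟨D, hD, rfl⟩
  · rcases Finset.mem_insert.mp hxC with rfl | hxD
    · exact Or.inl ⟨rfl, ⟨D, hD⟩⟩
    · exact Or.inr (Or.inr (Or.inl (mem_lits.mpr ⟨D, hD, hxD⟩)))
  · rcases Finset.mem_insert.mp hxC with rfl | hxD
    · exact Or.inr (Or.inl ⟨rfl, ⟨D, hD⟩⟩)
    · exact Or.inr (Or.inr (Or.inr (mem_lits.mpr ⟨D, hD, hxD⟩)))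

lemma split_lits_left {x : Lit} (hx : x ∈ lits (sideOf v true F1 F')) : x ∈ lits F' := by
  rcases mem_lits.mp hx with ⟨D, hD, hxD⟩
  exact mem_lits.mpr ⟨insert (v, true) D, (Finset.mem_filter.mp hD).2,
    Finset.mem_insert_of_mem hxD⟩

lemma split_lits_right {x : Lit} (hx : x ∈ lits (sideOf v false F2 F')) : x ∈ lits F' := by
  rcases mem_lits.mp hx with ⟨D, hD, hxD⟩
  exact mem_lits.mpr ⟨insert (v, false) D, (Finset.mem_filter.mp hD).2,
    Finset.mem_insert_of_mem hxD⟩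

lemma split_vlit_left (h : (sideOf v true F1 F').Nonempty) : ((v, true) : Lit) ∈ lits F' := by
  rcases h with ⟨D, hD⟩
  exact mem_lits.mpr ⟨insert (v, true) D, (Finset.mem_filter.mp hD).2, Finset.mem_insert_self _ _⟩

lemma split_vlit_right (h : (sideOf v false F2 F').Nonempty) : ((v, false) : Lit) ∈ lits F' := by
  rcases h with ⟨D, hD⟩
  exact mem_lits.mpr ⟨insert (v, false) D, (Finset.mem_filter.mp hD).2, Finset.mem_insert_self _ _⟩

include hdisj

lemma split_pure_left : pureC (sideOf v true F1 F') ⊆ pureC F' := by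
  intro x hx
  rcases mem_pureC.mp hx with ⟨hxl, hxc⟩
  have hxv : x.1 ∈ vars F1 := lits_sideOf_var hxl
  refine mem_pureC.mpr ⟨split_lits_left hv1 hv2 hsub hxl, ?_⟩
  intro hc
  rcases split_lits_cases hv1 hv2 hsub _ hc with ⟨heq, _⟩ | ⟨heq, _⟩ | h | h
  · exact hv1 (by rw [show x.1 = v from congrArg Prod.fst heq] at hxv; exact hxv)
  · exact hv1 (by rw [show x.1 = v from congrArg Prod.fst heq] at hxv; exact hxv)
  · exact hxc h
  · have h' := lits_sideOf_var h
    rw [Finset.eq_empty_iff_forall_notMem] at hdisj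
    exact hdisj x.1 (Finset.mem_inter.mpr ⟨hxv, h'⟩)

lemma split_pure_right : pureC (sideOf v false F2 F') ⊆ pureC F' := by
  intro x hx
  rcases mem_pureC.mp hx with ⟨hxl, hxc⟩
  have hxv : x.1 ∈ vars F2 := lits_sideOf_var hxl
  refine mem_pureC.mpr ⟨split_lits_right hv1 hv2 hsub hxl, ?_⟩
  intro hc
  rcases split_lits_cases hv1 hv2 hsub _ hc with ⟨heq, _⟩ | ⟨heq, _⟩ | h | h
  · exact hv2 (by rw [show x.1 = v from congrArg Prod.fst heq] at hxv; exact hxv)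
  · exact hv2 (by rw [show x.1 = v from congrArg Prod.fst heq] at hxv; exact hxv)
  · have h' := lits_sideOf_var h
    rw [Finset.eq_empty_iff_forall_notMem] at hdisj
    exact hdisj x.1 (Finset.mem_inter.mpr ⟨h', hxv⟩)
  · exact hxc h

lemma split_pure_cases : ∀ y ∈ pureC F',
    y = (v, true) ∨ y = (v, false) ∨
    y ∈ pureC (sideOf v true F1 F') ∨ y ∈ pureC (sideOf v false F2 F') := by
  intro y hy
  rcases mem_pureC.mp hy with ⟨hyl, hyc⟩
  rcases split_lits_cases hv1 hv2 hsub y hyl with ⟨heq, _⟩ | ⟨heq, _⟩ | h | h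
  · exact Or.inl heq
  · exact Or.inr (Or.inl heq)
  · refine Or.inr (Or.inr (Or.inl (mem_pureC.mpr ⟨h, ?_⟩)))
    intro hc
    exact hyc (split_lits_left hv1 hv2 hsub hc)
  · refine Or.inr (Or.inr (Or.inr (mem_pureC.mpr ⟨h, ?_⟩)))
    intro hc
    exact hyc (split_lits_right hv1 hv2 hsub hc)

omit hdisj

lemma split_pure_vtrue (h : ((v, true) : Lit) ∈ pureC F') :
    (sideOf v true F1 F').Nonempty ∧ ¬ (sideOf v false F2 F').Nonempty := by
  rcases mem_pureC.mp h with ⟨hyl, hyc⟩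
  constructor
  · rcases split_lits_cases hv1 hv2 hsub _ hyl with ⟨_, hne⟩ | ⟨heq, _⟩ | h' | h'
    · exact hne
    · exact absurd (congrArg Prod.snd heq) (by simp)
    · exact absurd (lits_sideOf_var h') hv1
    · exact absurd (lits_sideOf_var h') hv2
  · intro hne
    apply hyc
    rw [show Lit.comp (v, true) = (v, false) from rfl]
    exact split_vlit_right hv1 hv2 hsub hne

lemma split_pure_vfalse (h : ((v, false) : Lit) ∈ pureC F') :
    (sideOf v false F2 F').Nonempty ∧ ¬ (sideOf v true F1 F').Nonempty := by
  rcases mem_pureC.mp h with ⟨hyl, hyc⟩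
  constructor
  · rcases split_lits_cases hv1 hv2 hsub _ hyl with ⟨heq, _⟩ | ⟨_, hne⟩ | h' | h'
    · exact absurd (congrArg Prod.snd heq) (by simp)
    · exact hne
    · exact absurd (lits_sideOf_var h') hv1
    · exact absurd (lits_sideOf_var h') hv2
  · intro hne
    apply hyc
    rw [show Lit.comp (v, false) = (v, true) from rfl]
    exact split_vlit_left hv1 hv2 hsub hne

lemma split_sat_down_left {a : ℕ → Bool} (ha : satisfies a F') (hav : a v = false) :
    satisfies a (sideOf v true F1 F') := by
  intro D hD
  rcases ha _ (Finset.mem_filter.mp hD).2 with ⟨x, hx, hev⟩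
  rcases Finset.mem_insert.mp hx with rfl | hxD
  · rw [eval_true_iff] at hev
    simp [hav] at hev
  · exact ⟨x, hxD, hev⟩

lemma split_sat_down_right {a : ℕ → Bool} (ha : satisfies a F') (hav : a v = true) :
    satisfies a (sideOf v false F2 F') := by
  intro D hD
  rcases ha _ (Finset.mem_filter.mp hD).2 with ⟨x, hx, hev⟩
  rcases Finset.mem_insert.mp hx with rfl | hxD
  · rw [eval_true_iff] at hev
    simp [hav] at hev
  · exact ⟨x, hxD, hev⟩

lemma split_sat_up_left {a : ℕ → Bool} (hav : a v = false)
    (ha : satisfies a (sideOf v true F1 F')) : satisfies a F' := by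
  intro C hC
  rcases split_mem_cases hv1 hv2 hsub C hC with ⟨D, hD, rfl⟩ | ⟨D, hD, rfl⟩
  · rcases ha D hD with ⟨x, hx, hev⟩
    exact ⟨x, Finset.mem_insert_of_mem hx, hev⟩
  · exact ⟨(v, false), Finset.mem_insert_self _ _, by rw [eval_true_iff]; exact hav⟩

lemma split_sat_up_right {a : ℕ → Bool} (hav : a v = true)
    (ha : satisfies a (sideOf v false F2 F')) : satisfies a F' := by
  intro C hC
  rcases split_mem_cases hv1 hv2 hsub C hC with ⟨D, hD, rfl⟩ | ⟨D, hD, rfl⟩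
  · exact ⟨(v, true), Finset.mem_insert_self _ _, by rw [eval_true_iff]; exact hav⟩
  · rcases ha D hD with ⟨x, hx, hev⟩
    exact ⟨x, Finset.mem_insert_of_mem hx, hev⟩

end SplitCtx
/-! ### Module 9: the key lemmas for trees -/

lemma lits_mono {G G' : ClauseSet} (h : G ⊆ G') : lits G ⊆ lits G' := by
  intro x hx
  rcases mem_lits.mp hx with ⟨C, hC, hxC⟩
  exact mem_lits.mpr ⟨C, h hC, hxC⟩

lemma mem_lits_nonempty {x : Lit} {G : ClauseSet} (h : x ∈ lits G) : G.Nonempty := by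
  rcases mem_lits.mp h with ⟨C, hC, _⟩
  exact ⟨C, hC⟩

lemma lits_singleton_empty : lits ({∅} : ClauseSet) = ∅ := by
  rw [Finset.eq_empty_iff_forall_notMem]
  intro x hx
  rcases mem_lits.mp hx with ⟨C, hC, hxC⟩
  rw [Finset.mem_singleton.mp hC] at hxC
  exact Finset.notMem_empty x hxC

def comb (v : ℕ) (bv : Bool) (V : Finset ℕ) (b1 b2 : ℕ → Bool) : ℕ → Bool :=
  fun u => if u = v then bv else if u ∈ V then b1 u else b2 u

lemma comb_v {v bv V b1 b2} : comb v bv V b1 b2 v = bv := by simp [comb]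

lemma comb_mem {v bv V b1 b2 u} (hne : u ≠ v) (hu : u ∈ V) : comb v bv V b1 b2 u = b1 u := by
  simp [comb, hne, hu]

lemma comb_not {v bv V b1 b2 u} (hne : u ≠ v) (hu : u ∉ V) : comb v bv V b1 b2 u = b2 u := by
  simp [comb, hne, hu]

lemma satisfies_comb {v bv V b1 b2} {G : ClauseSet} (hb1 : satisfies b1 G)
    (hvars : vars G ⊆ V) (hv : v ∉ V) : satisfies (comb v bv V b1 b2) G := by
  intro C hC
  refine (clause_sat_congr (a := comb v bv V b1 b2) (b := b1) ?_).mpr (hb1 C hC)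
  intro u hu
  have huV : u ∈ V := hvars (mem_vars.mpr ⟨C, hC, hu⟩)
  exact comb_mem (fun h => hv (h ▸ huV)) huV

lemma KL1 {F : ClauseSet} (h : IsTree F) :
    ∀ F' ⊆ F, F'.Nonempty → Psi F' (pureC F') := by
  induction h with
  | base =>
    intro F' hsub hne
    rintro ⟨a, ha, _⟩
    have hmem : (∅ : Clause) ∈ F' := by
      rcases hne with ⟨C, hC⟩
      have := Finset.mem_singleton.mp (hsub hC)
      rwa [this] at hC
    rcases ha ∅ hmem with ⟨x, hx, _⟩
    exact Finset.notMem_empty x hx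
  | split v F1 F2 hv1 hv2 hdisj h1 h2 ih1 ih2 =>
    intro F' hsub hne
    rintro ⟨a, ha, hf⟩
    rcases Bool.eq_false_or_eq_true (a v) with hav | hav
    · -- a v = true: use the right side
      have h2ne : (sideOf v false F2 F').Nonempty := by
        by_contra hemp
        have h1ne : (sideOf v true F1 F').Nonempty := by
          rcases hne with ⟨C, hC⟩
          rcases split_mem_cases hv1 hv2 hsub C hC with ⟨D, hD, _⟩ | ⟨D, hD, _⟩
          · exact ⟨D, hD⟩
          · exact absurd ⟨D, hD⟩ hemp
        have hpure : ((v, true) : Lit) ∈ pureC F' := by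
          refine mem_pureC.mpr ⟨split_vlit_left hv1 hv2 hsub h1ne, ?_⟩
          intro hc
          rcases split_lits_cases hv1 hv2 hsub _ hc with ⟨heq, _⟩ | ⟨_, hne'⟩ | h' | h'
          · exact absurd (congrArg Prod.snd heq) (by simp [Lit.comp])
          · exact hemp hne'
          · exact hv1 (lits_sideOf_var h')
          · exact hv2 (lits_sideOf_var h')
        have := hf _ hpure
        rw [eval_false_iff] at this
        simp [hav] at this
      exact ih2 _ sideOf_subset h2ne ⟨a, split_sat_down_right hv1 hv2 hsub ha hav,
        falsifying_mono (split_pure_right hv1 hv2 hdisj hsub) hf⟩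
    · -- a v = false: use the left side
      have h1ne : (sideOf v true F1 F').Nonempty := by
        by_contra hemp
        have h2ne : (sideOf v false F2 F').Nonempty := by
          rcases hne with ⟨C, hC⟩
          rcases split_mem_cases hv1 hv2 hsub C hC with ⟨D, hD, _⟩ | ⟨D, hD, _⟩
          · exact absurd ⟨D, hD⟩ hemp
          · exact ⟨D, hD⟩
        have hpure : ((v, false) : Lit) ∈ pureC F' := by
          refine mem_pureC.mpr ⟨split_vlit_right hv1 hv2 hsub h2ne, ?_⟩
          intro hc
          rcases split_lits_cases hv1 hv2 hsub _ hc with ⟨_, hne'⟩ | ⟨heq, _⟩ | h' | h'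
          · exact hemp hne'
          · exact absurd (congrArg Prod.snd heq) (by simp [Lit.comp])
          · exact hv1 (lits_sideOf_var h')
          · exact hv2 (lits_sideOf_var h')
        have := hf _ hpure
        rw [eval_false_iff] at this
        simp [hav] at this
      exact ih1 _ sideOf_subset h1ne ⟨a, split_sat_down_left hv1 hv2 hsub ha hav,
        falsifying_mono (split_pure_left hv1 hv2 hdisj hsub) hf⟩

lemma sideOf_self_left {v : ℕ} {G1 : ClauseSet} (Y : ClauseSet) :
    sideOf v true G1 (G1.image (insert (v, true)) ∪ Y) = G1 := by
  apply Finset.filter_true_of_mem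
  intro D hD
  exact Finset.mem_union_left _ (Finset.mem_image_of_mem _ hD)

lemma sideOf_self_right {v : ℕ} {G2 : ClauseSet} (X : ClauseSet) :
    sideOf v false G2 (X ∪ G2.image (insert (v, false))) = G2 := by
  apply Finset.filter_true_of_mem
  intro D hD
  exact Finset.mem_union_right _ (Finset.mem_image_of_mem _ hD)

lemma pureC_empty_side {v : ℕ} {p : Bool} {F'' : ClauseSet} {y : Lit}
    (h : y ∈ pureC (sideOf v p (∅ : ClauseSet) F'')) : False := by
  have := (mem_pureC.mp h).1
  rcases mem_lits.mp this with ⟨C, hC, _⟩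
  have := sideOf_subset hC
  exact Finset.notMem_empty _ this
/-! ### Module 10: KL2 -/

lemma split_Psi_side_left {v : ℕ} {F1 F2 F' : ClauseSet} {Q : Clause}
    (hv1 : v ∉ vars F1) (hv2 : v ∉ vars F2)
    (hsub : F' ⊆ F1.image (insert (v, true)) ∪ F2.image (insert (v, false)))
    (hvfQ : ((v, false) : Lit) ∉ Q) (hQtf : tautFree Q) (hPsi : Psi F' Q) :
    Psi (sideOf v true F1 F') (Q.filter (fun x => x.1 ∈ vars F1)) := by
  rintro ⟨b1, hb1, hb1f⟩
  apply hPsi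
  refine ⟨comb v false (vars F1) b1 (dflt Q), ?_, ?_⟩
  · exact split_sat_up_left hv1 hv2 hsub comb_v
      (satisfies_comb hb1 (vars_mono sideOf_subset) hv1)
  · intro x hxQ
    by_cases hxv : x.1 = v
    · have hxe : x = (v, true) := by
        rcases eq_or_comp_of_var_eq (show x.1 = ((v, true) : Lit).1 from hxv) with h1 | h1
        · exact h1
        · exfalso
          apply hvfQ
          rw [show ((v, false) : Lit) = x from by rw [h1]; rfl]
          exact hxQ
      rw [hxe, eval_false_iff]
      simpa using comb_v
    · by_cases hxF1 : x.1 ∈ vars F1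
      · have hx1 : x ∈ Q.filter (fun x => x.1 ∈ vars F1) := Finset.mem_filter.mpr ⟨hxQ, hxF1⟩
        have hev := hb1f x hx1
        rw [eval_false_iff] at hev ⊢
        rw [comb_mem hxv hxF1]
        exact hev
      · rw [eval_false_iff, comb_not hxv hxF1, ← eval_false_iff]
        exact dflt_falsifies hQtf x hxQ

lemma split_Psi_side_right {v : ℕ} {F1 F2 F' : ClauseSet} {Q : Clause}
    (hv1 : v ∉ vars F1) (hv2 : v ∉ vars F2)
    (hsub : F' ⊆ F1.image (insert (v, true)) ∪ F2.image (insert (v, false)))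
    (hvtQ : ((v, true) : Lit) ∉ Q) (hQtf : tautFree Q) (hPsi : Psi F' Q) :
    Psi (sideOf v false F2 F') (Q.filter (fun x => x.1 ∈ vars F2)) := by
  rintro ⟨b2, hb2, hb2f⟩
  apply hPsi
  refine ⟨comb v true (vars F2) b2 (dflt Q), ?_, ?_⟩
  · exact split_sat_up_right hv1 hv2 hsub comb_v
      (satisfies_comb hb2 (vars_mono sideOf_subset) hv2)
  · intro x hxQ
    by_cases hxv : x.1 = v
    · have hxe : x = (v, false) := by
        rcases eq_or_comp_of_var_eq (show x.1 = ((v, false) : Lit).1 from hxv) with h1 | h1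
        · exact h1
        · exfalso
          apply hvtQ
          rw [show ((v, true) : Lit) = x from by rw [h1]; rfl]
          exact hxQ
      rw [hxe, eval_false_iff]
      simpa using comb_v
    · by_cases hxF2 : x.1 ∈ vars F2
      · have hx1 : x ∈ Q.filter (fun x => x.1 ∈ vars F2) := Finset.mem_filter.mpr ⟨hxQ, hxF2⟩
        have hev := hb2f x hx1
        rw [eval_false_iff] at hev ⊢
        rw [comb_mem hxv hxF2]
        exact hev
      · rw [eval_false_iff, comb_not hxv hxF2, ← eval_false_iff]
        exact dflt_falsifies hQtf x hxQ

lemma sideOf_self_left' {v : ℕ} {G1 : ClauseSet} :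
    sideOf v true G1 (G1.image (insert (v, true))) = G1 := by
  apply Finset.filter_true_of_mem
  intro D hD
  exact Finset.mem_image_of_mem _ hD

lemma sideOf_self_right' {v : ℕ} {G2 : ClauseSet} :
    sideOf v false G2 (G2.image (insert (v, false))) = G2 := by
  apply Finset.filter_true_of_mem
  intro D hD
  exact Finset.mem_image_of_mem _ hD

lemma KL2 {F : ClauseSet} (h : IsTree F) :
    ∀ F' ⊆ F, ∀ Q : Clause, tautFree Q → Psi F' Q →
      ∃ F'' , F'' ⊆ F' ∧ F''.Nonempty ∧ pureC F'' ⊆ Q := by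
  induction h with
  | base =>
    intro F' hsub Q hQtf hPsi
    have hne : F'.Nonempty := by
      rcases Finset.eq_empty_or_nonempty F' with rfl | hne
      · exact absurd hPsi (not_Psi_empty hQtf)
      · exact hne
    refine ⟨F', Finset.Subset.refl _, hne, ?_⟩
    intro y hy
    exfalso
    have := lits_mono hsub (mem_pureC.mp hy).1
    rw [lits_singleton_empty] at this
    exact Finset.notMem_empty _ this
  | split v F1 F2 hv1 hv2 hdisj h1 h2 ih1 ih2 =>
    intro F' hsub Q hQtf hPsi
    have hQ1tf : tautFree (Q.filter (fun x => x.1 ∈ vars F1)) :=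
      tautFree_mono (Finset.filter_subset _ _) hQtf
    have hQ2tf : tautFree (Q.filter (fun x => x.1 ∈ vars F2)) :=
      tautFree_mono (Finset.filter_subset _ _) hQtf
    by_cases hvt : ((v, true) : Lit) ∈ Q
    · have hvf : ((v, false) : Lit) ∉ Q := by
        have := hQtf _ hvt
        rw [show Lit.comp (v, true) = (v, false) from rfl] at this
        exact this
      have hclaim := split_Psi_side_left hv1 hv2 hsub hvf hQtf hPsi
      obtain ⟨F1'', hsub1, hne1, hpure1⟩ := ih1 _ sideOf_subset _ hQ1tf hclaim
      refine ⟨F1''.image (insert (v, true)), ?_, hne1.image _, ?_⟩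
      · intro C hC
        rcases Finset.mem_image.mp hC with ⟨D, hD, rfl⟩
        exact (Finset.mem_filter.mp (hsub1 hD)).2
      · intro y hy
        have hsub'' : F1''.image (insert (v, true)) ⊆
            F1''.image (insert (v, true)) ∪ (∅ : ClauseSet).image (insert (v, false)) := by
          simp
        have hv1'' : v ∉ vars F1'' := fun hm => hv1 (vars_mono (hsub1.trans sideOf_subset) hm)
        have hv2'' : v ∉ vars (∅ : ClauseSet) := by simp [vars]
        have hdisj'' : vars F1'' ∩ vars (∅ : ClauseSet) = ∅ := by simp [vars]
        rcases split_pure_cases hv1'' hv2'' hdisj'' hsub'' y hy with heq | heq | h' | h'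
        · rw [heq]; exact hvt
        · exfalso
          obtain ⟨⟨D, hD⟩, _⟩ := split_pure_vfalse hv1'' hv2'' hsub'' (heq ▸ hy)
          exact Finset.notMem_empty D (sideOf_subset hD)
        · rw [sideOf_self_left'] at h'
          exact Finset.filter_subset _ _ (hpure1 h')
        · exact absurd h' (fun hh => pureC_empty_side hh)
    · by_cases hvf : ((v, false) : Lit) ∈ Q
      · have hclaim := split_Psi_side_right hv1 hv2 hsub hvt hQtf hPsi
        obtain ⟨F2'', hsub2, hne2, hpure2⟩ := ih2 _ sideOf_subset _ hQ2tf hclaim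
        refine ⟨F2''.image (insert (v, false)), ?_, hne2.image _, ?_⟩
        · intro C hC
          rcases Finset.mem_image.mp hC with ⟨D, hD, rfl⟩
          exact (Finset.mem_filter.mp (hsub2 hD)).2
        · intro y hy
          have hsub'' : F2''.image (insert (v, false)) ⊆
              (∅ : ClauseSet).image (insert (v, true)) ∪ F2''.image (insert (v, false)) := by
            simp
          have hv2'' : v ∉ vars F2'' := fun hm => hv2 (vars_mono (hsub2.trans sideOf_subset) hm)
          have hv1'' : v ∉ vars (∅ : ClauseSet) := by simp [vars]
          have hdisj'' : vars (∅ : ClauseSet) ∩ vars F2'' = ∅ := by simp [vars]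
          rcases split_pure_cases hv1'' hv2'' hdisj'' hsub'' y hy with heq | heq | h' | h'
          · exfalso
            obtain ⟨⟨D, hD⟩, _⟩ := split_pure_vtrue hv1'' hv2'' hsub'' (heq ▸ hy)
            exact Finset.notMem_empty D (sideOf_subset hD)
          · rw [heq]; exact hvf
          · exact absurd h' (fun hh => pureC_empty_side hh)
          · rw [sideOf_self_right'] at h'
            exact Finset.filter_subset _ _ (hpure2 h')
      · have hclaim1 := split_Psi_side_left hv1 hv2 hsub hvf hQtf hPsi
        have hclaim2 := split_Psi_side_right hv1 hv2 hsub hvt hQtf hPsi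
        obtain ⟨F1'', hsub1, hne1, hpure1⟩ := ih1 _ sideOf_subset _ hQ1tf hclaim1
        obtain ⟨F2'', hsub2, hne2, hpure2⟩ := ih2 _ sideOf_subset _ hQ2tf hclaim2
        refine ⟨F1''.image (insert (v, true)) ∪ F2''.image (insert (v, false)), ?_, ?_, ?_⟩
        · intro C hC
          rcases Finset.mem_union.mp hC with hC | hC
          · rcases Finset.mem_image.mp hC with ⟨D, hD, rfl⟩
            exact (Finset.mem_filter.mp (hsub1 hD)).2
          · rcases Finset.mem_image.mp hC with ⟨D, hD, rfl⟩
            exact (Finset.mem_filter.mp (hsub2 hD)).2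
        · rcases hne1 with ⟨D, hD⟩
          exact ⟨insert (v, true) D, Finset.mem_union_left _ (Finset.mem_image_of_mem _ hD)⟩
        · intro y hy
          have hsub'' : F1''.image (insert (v, true)) ∪ F2''.image (insert (v, false)) ⊆
              F1''.image (insert (v, true)) ∪ F2''.image (insert (v, false)) :=
            Finset.Subset.refl _
          have hv1'' : v ∉ vars F1'' := fun hm => hv1 (vars_mono (hsub1.trans sideOf_subset) hm)
          have hv2'' : v ∉ vars F2'' := fun hm => hv2 (vars_mono (hsub2.trans sideOf_subset) hm)
          have hdisj'' : vars F1'' ∩ vars F2'' = ∅ := by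
            rw [Finset.eq_empty_iff_forall_notMem]
            intro z hz
            rcases Finset.mem_inter.mp hz with ⟨hz1, hz2⟩
            rw [Finset.eq_empty_iff_forall_notMem] at hdisj
            exact hdisj z (Finset.mem_inter.mpr ⟨vars_mono (hsub1.trans sideOf_subset) hz1,
              vars_mono (hsub2.trans sideOf_subset) hz2⟩)
          rcases split_pure_cases hv1'' hv2'' hdisj'' hsub'' y hy with heq | heq | h' | h'
          · exfalso
            obtain ⟨_, hno⟩ := split_pure_vtrue hv1'' hv2'' hsub'' (heq ▸ hy)
            apply hno
            rcases hne2 with ⟨D, hD⟩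
            exact ⟨D, Finset.mem_filter.mpr ⟨hD, Finset.mem_union_right _ (Finset.mem_image_of_mem _ hD)⟩⟩
          · exfalso
            obtain ⟨_, hno⟩ := split_pure_vfalse hv1'' hv2'' hsub'' (heq ▸ hy)
            apply hno
            rcases hne1 with ⟨D, hD⟩
            exact ⟨D, Finset.mem_filter.mpr ⟨hD, Finset.mem_union_left _ (Finset.mem_image_of_mem _ hD)⟩⟩
          · rw [sideOf_self_left _] at h'
            exact Finset.filter_subset _ _ (hpure1 h')
          · rw [sideOf_self_right _] at h'
            exact Finset.filter_subset _ _ (hpure2 h')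
/-! ### Module 11: KL3a and KL3b -/

lemma KL3a {F : ClauseSet} (h : IsTree F) :
    ∀ F' ⊆ F, ∀ x ∈ pureC F', ¬ Psi F' ((pureC F').erase x) := by
  induction h with
  | base =>
    intro F' hsub x hx _
    have := lits_mono hsub (mem_pureC.mp hx).1
    rw [lits_singleton_empty] at this
    exact Finset.notMem_empty _ this
  | split v F1 F2 hv1 hv2 hdisj h1 h2 ih1 ih2 =>
    intro F' hsub x hx hPsi
    rcases split_pure_cases hv1 hv2 hdisj hsub x hx with heq | heq | hx1 | hx2
    · -- x = (v, true)
      obtain ⟨h1ne, h2emp⟩ := split_pure_vtrue hv1 hv2 hsub (heq ▸ hx)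
      apply hPsi
      refine ⟨comb v true (vars F1) (dflt (pureC (sideOf v true F1 F'))) (fun _ => true), ?_, ?_⟩
      · refine split_sat_up_right hv1 hv2 hsub comb_v ?_
        intro D hD
        exact absurd ⟨D, hD⟩ h2emp
      · intro y hy
        rcases Finset.mem_erase.mp hy with ⟨hyne, hyp⟩
        rcases split_pure_cases hv1 hv2 hdisj hsub y hyp with heq' | heq' | hy1 | hy2
        · exact absurd (heq' ▸ heq ▸ rfl : y = x) hyne
        · exfalso
          obtain ⟨h2ne, _⟩ := split_pure_vfalse hv1 hv2 hsub (heq' ▸ hyp)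
          exact h2emp h2ne
        · have hyv : y.1 ∈ vars F1 := lits_sideOf_var (mem_pureC.mp hy1).1
          have hyvne : y.1 ≠ v := fun hh => hv1 (hh ▸ hyv)
          exact dflt_falsifies_at (pureC_tautFree _) hy1 (comb_mem hyvne hyv)
        · exfalso
          obtain ⟨D, hD⟩ := mem_lits_nonempty (mem_pureC.mp hy2).1
          rcases mem_lits.mp (mem_pureC.mp hy2).1 with ⟨D', hD', _⟩
          exact h2emp ⟨D', hD'⟩
    · -- x = (v, false)
      obtain ⟨h2ne, h1emp⟩ := split_pure_vfalse hv1 hv2 hsub (heq ▸ hx)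
      apply hPsi
      refine ⟨comb v false (vars F2) (dflt (pureC (sideOf v false F2 F'))) (fun _ => true), ?_, ?_⟩
      · refine split_sat_up_left hv1 hv2 hsub comb_v ?_
        intro D hD
        exact absurd ⟨D, hD⟩ h1emp
      · intro y hy
        rcases Finset.mem_erase.mp hy with ⟨hyne, hyp⟩
        rcases split_pure_cases hv1 hv2 hdisj hsub y hyp with heq' | heq' | hy1 | hy2
        · exfalso
          obtain ⟨h1ne, _⟩ := split_pure_vtrue hv1 hv2 hsub (heq' ▸ hyp)
          exact h1emp h1ne
        · exact absurd (heq' ▸ heq ▸ rfl : y = x) hyne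
        · exfalso
          rcases mem_lits.mp (mem_pureC.mp hy1).1 with ⟨D', hD', _⟩
          exact h1emp ⟨D', hD'⟩
        · have hyv : y.1 ∈ vars F2 := lits_sideOf_var (mem_pureC.mp hy2).1
          have hyvne : y.1 ≠ v := fun hh => hv2 (hh ▸ hyv)
          exact dflt_falsifies_at (pureC_tautFree _) hy2 (comb_mem hyvne hyv)
    · -- x ∈ pureC F1'
      have h1ne : (sideOf v true F1 F').Nonempty := by
        rcases mem_lits.mp (mem_pureC.mp hx1).1 with ⟨D', hD', _⟩
        exact ⟨D', hD'⟩
      have := ih1 _ sideOf_subset x hx1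
      rw [Psi, not_not] at this
      rcases this with ⟨b1, hb1, hb1f⟩
      apply hPsi
      refine ⟨comb v false (vars F1) b1 (dflt (pureC (sideOf v false F2 F'))), ?_, ?_⟩
      · exact split_sat_up_left hv1 hv2 hsub comb_v
          (satisfies_comb hb1 (vars_mono sideOf_subset) hv1)
      · intro y hy
        rcases Finset.mem_erase.mp hy with ⟨hyne, hyp⟩
        rcases split_pure_cases hv1 hv2 hdisj hsub y hyp with heq' | heq' | hy1 | hy2
        · rw [heq', eval_false_iff]
          simpa using comb_v
        · exfalso
          obtain ⟨_, h1emp⟩ := split_pure_vfalse hv1 hv2 hsub (heq' ▸ hyp)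
          exact h1emp h1ne
        · have hyv : y.1 ∈ vars F1 := lits_sideOf_var (mem_pureC.mp hy1).1
          have hyvne : y.1 ≠ v := fun hh => hv1 (hh ▸ hyv)
          have hev := hb1f y (Finset.mem_erase.mpr ⟨hyne, hy1⟩)
          rw [eval_false_iff] at hev ⊢
          rw [comb_mem hyvne hyv]
          exact hev
        · have hyv : y.1 ∈ vars F2 := lits_sideOf_var (mem_pureC.mp hy2).1
          have hyvne : y.1 ≠ v := fun hh => hv2 (hh ▸ hyv)
          have hynF1 : y.1 ∉ vars F1 := by
            intro hmem
            rw [Finset.eq_empty_iff_forall_notMem] at hdisj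
            exact hdisj y.1 (Finset.mem_inter.mpr ⟨hmem, hyv⟩)
          exact dflt_falsifies_at (pureC_tautFree _) hy2 (comb_not hyvne hynF1)
    · -- x ∈ pureC F2'
      have h2ne : (sideOf v false F2 F').Nonempty := by
        rcases mem_lits.mp (mem_pureC.mp hx2).1 with ⟨D', hD', _⟩
        exact ⟨D', hD'⟩
      have := ih2 _ sideOf_subset x hx2
      rw [Psi, not_not] at this
      rcases this with ⟨b2, hb2, hb2f⟩
      apply hPsi
      refine ⟨comb v true (vars F2) b2 (dflt (pureC (sideOf v true F1 F'))), ?_, ?_⟩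
      · exact split_sat_up_right hv1 hv2 hsub comb_v
          (satisfies_comb hb2 (vars_mono sideOf_subset) hv2)
      · intro y hy
        rcases Finset.mem_erase.mp hy with ⟨hyne, hyp⟩
        rcases split_pure_cases hv1 hv2 hdisj hsub y hyp with heq' | heq' | hy1 | hy2
        · exfalso
          obtain ⟨_, h2emp⟩ := split_pure_vtrue hv1 hv2 hsub (heq' ▸ hyp)
          exact h2emp h2ne
        · rw [heq', eval_false_iff]
          simpa using comb_v
        · have hyv : y.1 ∈ vars F1 := lits_sideOf_var (mem_pureC.mp hy1).1
          have hyvne : y.1 ≠ v := fun hh => hv1 (hh ▸ hyv)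
          have hynF2 : y.1 ∉ vars F2 := by
            intro hmem
            rw [Finset.eq_empty_iff_forall_notMem] at hdisj
            exact hdisj y.1 (Finset.mem_inter.mpr ⟨hyv, hmem⟩)
          exact dflt_falsifies_at (pureC_tautFree _) hy1 (comb_not hyvne hynF2)
        · have hyv : y.1 ∈ vars F2 := lits_sideOf_var (mem_pureC.mp hy2).1
          have hyvne : y.1 ≠ v := fun hh => hv2 (hh ▸ hyv)
          have hev := hb2f y (Finset.mem_erase.mpr ⟨hyne, hy2⟩)
          rw [eval_false_iff] at hev ⊢
          rw [comb_mem hyvne hyv]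
          exact hev

lemma KL3b {F : ClauseSet} (h : IsTree F) :
    ∀ F' ⊆ F, ∀ C ∈ F', ¬ Psi (F'.erase C) (pureC F') := by
  induction h with
  | base =>
    intro F' hsub C hC hPsi
    apply hPsi
    refine ⟨fun _ => true, ?_, ?_⟩
    · intro D hD
      exfalso
      rcases Finset.mem_erase.mp hD with ⟨hne, hDF⟩
      have h1 := Finset.mem_singleton.mp (hsub hDF)
      have h2 := Finset.mem_singleton.mp (hsub hC)
      exact hne (h1.trans h2.symm)
    · intro y hy
      exfalso
      have := lits_mono hsub (mem_pureC.mp hy).1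
      rw [lits_singleton_empty] at this
      exact Finset.notMem_empty _ this
  | split v F1 F2 hv1 hv2 hdisj h1 h2 ih1 ih2 =>
    intro F' hsub C hC hPsi
    rcases split_mem_cases hv1 hv2 hsub C hC with ⟨D₀, hD₀, rfl⟩ | ⟨D₀, hD₀, rfl⟩
    · have h1ne : (sideOf v true F1 F').Nonempty := ⟨D₀, hD₀⟩
      have := ih1 _ sideOf_subset D₀ hD₀
      rw [Psi, not_not] at this
      rcases this with ⟨b1, hb1, hb1f⟩
      apply hPsi
      set a := comb v false (vars F1) b1 (dflt (pureC (sideOf v false F2 F'))) with ha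
      refine ⟨a, ?_, ?_⟩
      · intro E hE
        rcases Finset.mem_erase.mp hE with ⟨hne, hEF⟩
        rcases split_mem_cases hv1 hv2 hsub E hEF with ⟨D, hD, rfl⟩ | ⟨D, hD, rfl⟩
        · have hDne : D ≠ D₀ := by
            rintro rfl
            exact hne rfl
          have hsatD : Clause.sat a D := by
            have hD' : D ∈ (sideOf v true F1 F').erase D₀ := Finset.mem_erase.mpr ⟨hDne, hD⟩
            have := satisfies_comb (v := v) (bv := false)
              (b2 := dflt (pureC (sideOf v false F2 F'))) hb1
              (vars_mono ((Finset.erase_subset _ _).trans sideOf_subset)) hv1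
            exact this D hD'
          exact clause_sat_mono hsatD (Finset.subset_insert _ _)
        · exact ⟨(v, false), Finset.mem_insert_self _ _, by rw [eval_true_iff]; exact comb_v⟩
      · intro y hy
        rcases split_pure_cases hv1 hv2 hdisj hsub y hy with heq' | heq' | hy1 | hy2
        · rw [heq', eval_false_iff]
          simpa using comb_v
        · exfalso
          obtain ⟨_, h1emp⟩ := split_pure_vfalse hv1 hv2 hsub (heq' ▸ hy)
          exact h1emp h1ne
        · have hyv : y.1 ∈ vars F1 := lits_sideOf_var (mem_pureC.mp hy1).1
          have hyvne : y.1 ≠ v := fun hh => hv1 (hh ▸ hyv)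
          have hev := hb1f y hy1
          rw [eval_false_iff] at hev ⊢
          rw [ha, comb_mem hyvne hyv]
          exact hev
        · have hyv : y.1 ∈ vars F2 := lits_sideOf_var (mem_pureC.mp hy2).1
          have hyvne : y.1 ≠ v := fun hh => hv2 (hh ▸ hyv)
          have hynF1 : y.1 ∉ vars F1 := by
            intro hmem
            rw [Finset.eq_empty_iff_forall_notMem] at hdisj
            exact hdisj y.1 (Finset.mem_inter.mpr ⟨hmem, hyv⟩)
          exact dflt_falsifies_at (pureC_tautFree _) hy2 (comb_not hyvne hynF1)
    · have h2ne : (sideOf v false F2 F').Nonempty := ⟨D₀, hD₀⟩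
      have := ih2 _ sideOf_subset D₀ hD₀
      rw [Psi, not_not] at this
      rcases this with ⟨b2, hb2, hb2f⟩
      apply hPsi
      set a := comb v true (vars F2) b2 (dflt (pureC (sideOf v true F1 F'))) with ha
      refine ⟨a, ?_, ?_⟩
      · intro E hE
        rcases Finset.mem_erase.mp hE with ⟨hne, hEF⟩
        rcases split_mem_cases hv1 hv2 hsub E hEF with ⟨D, hD, rfl⟩ | ⟨D, hD, rfl⟩
        · exact ⟨(v, true), Finset.mem_insert_self _ _, by rw [eval_true_iff]; exact comb_v⟩
        · have hDne : D ≠ D₀ := by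
            rintro rfl
            exact hne rfl
          have hsatD : Clause.sat a D := by
            have hD' : D ∈ (sideOf v false F2 F').erase D₀ := Finset.mem_erase.mpr ⟨hDne, hD⟩
            have := satisfies_comb (v := v) (bv := true)
              (b2 := dflt (pureC (sideOf v true F1 F'))) hb2
              (vars_mono ((Finset.erase_subset _ _).trans sideOf_subset)) hv2
            exact this D hD'
          exact clause_sat_mono hsatD (Finset.subset_insert _ _)
      · intro y hy
        rcases split_pure_cases hv1 hv2 hdisj hsub y hy with heq' | heq' | hy1 | hy2
        · exfalso
          obtain ⟨_, h2emp⟩ := split_pure_vtrue hv1 hv2 hsub (heq' ▸ hy)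
          exact h2emp h2ne
        · rw [heq', eval_false_iff]
          simpa using comb_v
        · have hyv : y.1 ∈ vars F1 := lits_sideOf_var (mem_pureC.mp hy1).1
          have hyvne : y.1 ≠ v := fun hh => hv1 (hh ▸ hyv)
          have hynF2 : y.1 ∉ vars F2 := by
            intro hmem
            rw [Finset.eq_empty_iff_forall_notMem] at hdisj
            exact hdisj y.1 (Finset.mem_inter.mpr ⟨hyv, hmem⟩)
          exact dflt_falsifies_at (pureC_tautFree _) hy1 (comb_not hyvne hynF2)
        · have hyv : y.1 ∈ vars F2 := lits_sideOf_var (mem_pureC.mp hy2).1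
          have hyvne : y.1 ≠ v := fun hh => hv2 (hh ▸ hyv)
          have hev := hb2f y hy2
          rw [eval_false_iff] at hev ⊢
          rw [ha, comb_mem hyvne hyv]
          exact hev
/-! ### Module 12: doping -/

lemma mem_dope {F : ClauseSet} {u : Clause → ℕ} {C' : Clause} :
    C' ∈ dope u F ↔ ∃ C ∈ F, insert ((u C, true) : Lit) C = C' := by
  simp [dope]

lemma entails_to_Psi {F : ClauseSet} {u : Clause → ℕ} {P : Clause}
    (hu : freshDoping u F) (htf : tautFree P) (hent : entails (dope u F) P) :
    Psi (F.filter (fun C => ((u C, true) : Lit) ∈ P)) (P.filter (fun x => x.1 ∈ vars F)) := by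
  rintro ⟨b, hb, hbf⟩
  set a := fun z => if z ∈ vars F then b z else dflt P z with ha
  have hsat : satisfies a (dope u F) := by
    intro C' hC'
    rcases mem_dope.mp hC' with ⟨C, hC, rfl⟩
    by_cases hCP : ((u C, true) : Lit) ∈ P
    · rcases hb C (Finset.mem_filter.mpr ⟨hC, hCP⟩) with ⟨x, hx, hev⟩
      refine ⟨x, Finset.mem_insert_of_mem hx, ?_⟩
      rw [← hev]
      refine (eval_congr ?_).symm
      have : x.1 ∈ vars F := varsC_subset_vars hC (mem_varsC_of_mem hx)
      simp [ha, this]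
    · refine ⟨(u C, true), Finset.mem_insert_self _ _, ?_⟩
      rw [eval_true_iff]
      have hfresh : u C ∉ vars F := hu.1 C hC
      show a (u C) = true
      rw [ha]
      simp only [if_neg hfresh]
      simp [dflt, hCP]
  rcases hent a hsat with ⟨y, hyP, hyev⟩
  by_cases hyF : y.1 ∈ vars F
  · have hf := hbf y (Finset.mem_filter.mpr ⟨hyP, hyF⟩)
    rw [show Lit.eval a y = Lit.eval b y from eval_congr (by simp [ha, hyF])] at hyev
    rw [hyev] at hf
    simp at hf
  · have : Lit.eval a y = false := dflt_falsifies_at htf hyP (by simp [ha, hyF])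
    rw [hyev] at this
    simp at this

lemma Psi_to_entails {F : ClauseSet} {u : Clause → ℕ} (P : Clause) {F'' : ClauseSet} {Q : Clause}
    (hsub : F'' ⊆ F) (hPsi : Psi F'' Q)
    (hdope : ∀ C ∈ F'', ((u C, true) : Lit) ∈ P) (hQ : Q ⊆ P) :
    entails (dope u F) P := by
  intro a hsat
  by_cases hex : ∃ C ∈ F'', a (u C) = true
  · rcases hex with ⟨C, hC, htrue⟩
    exact ⟨(u C, true), hdope C hC, by rw [eval_true_iff]; exact htrue⟩
  · push_neg at hex
    have hsatF'' : satisfies a F'' := by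
      intro C hC
      rcases hsat _ (mem_dope.mpr ⟨C, hsub hC, rfl⟩) with ⟨x, hx, hev⟩
      rcases Finset.mem_insert.mp hx with rfl | hxC
      · exfalso
        rw [eval_true_iff] at hev
        exact (hex C hC) hev
      · exact ⟨x, hxC, hev⟩
    have hnf : ¬ falsifying a Q := fun hf => hPsi ⟨a, hsatF'', hf⟩
    rw [falsifying] at hnf
    push_neg at hnf
    rcases hnf with ⟨y, hyQ, hyne⟩
    refine ⟨y, hQ hyQ, ?_⟩
    rcases Bool.eq_false_or_eq_true (Lit.eval a y) with h | h
    · exact h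
    · exact absurd h hyne

lemma mem_lits_dope {F' : ClauseSet} {u : Clause → ℕ} {x : Lit} :
    x ∈ lits (dope u F') ↔ (∃ C ∈ F', x = (u C, true)) ∨ x ∈ lits F' := by
  constructor
  · intro hx
    rcases mem_lits.mp hx with ⟨C', hC', hxC'⟩
    rcases mem_dope.mp hC' with ⟨C, hC, rfl⟩
    rcases Finset.mem_insert.mp hxC' with rfl | hxC
    · exact Or.inl ⟨C, hC, rfl⟩
    · exact Or.inr (mem_lits.mpr ⟨C, hC, hxC⟩)
  · intro hx
    rcases hx with ⟨C, hC, rfl⟩ | hx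
    · exact mem_lits.mpr ⟨insert (u C, true) C, mem_dope.mpr ⟨C, hC, rfl⟩,
        Finset.mem_insert_self _ _⟩
    · rcases mem_lits.mp hx with ⟨C, hC, hxC⟩
      exact mem_lits.mpr ⟨insert (u C, true) C, mem_dope.mpr ⟨C, hC, rfl⟩,
        Finset.mem_insert_of_mem hxC⟩

lemma pureC_dope {F F' : ClauseSet} {u : Clause → ℕ} (hu : freshDoping u F) (hsub : F' ⊆ F) :
    pureC (dope u F') = F'.image (fun C => ((u C, true) : Lit)) ∪ pureC F' := by
  have hfresh : ∀ C ∈ F', u C ∉ vars F' := by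
    intro C hC hmem
    exact hu.1 C (hsub hC) (vars_mono hsub hmem)
  ext x
  rw [mem_pureC, Finset.mem_union, Finset.mem_image]
  constructor
  · rintro ⟨hl, hc⟩
    rcases mem_lits_dope.mp hl with ⟨C, hC, rfl⟩ | hx
    · exact Or.inl ⟨C, hC, rfl⟩
    · refine Or.inr (mem_pureC.mpr ⟨hx, ?_⟩)
      intro hmem
      exact hc (mem_lits_dope.mpr (Or.inr hmem))
  · rintro (⟨C, hC, rfl⟩ | hx)
    · refine ⟨mem_lits_dope.mpr (Or.inl ⟨C, hC, rfl⟩), ?_⟩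
      intro hc
      rcases mem_lits_dope.mp hc with ⟨C', hC', heq⟩ | hc'
      · exact absurd (congrArg Prod.snd heq) (by simp [Lit.comp])
      · exact hfresh C hC (lits_var_mem hc')
    · rcases mem_pureC.mp hx with ⟨hl, hc⟩
      refine ⟨mem_lits_dope.mpr (Or.inr hl), ?_⟩
      intro hcd
      rcases mem_lits_dope.mp hcd with ⟨C', hC', heq⟩ | hc'
      · have : x.1 = u C' := congrArg Prod.fst heq
        exact hfresh C' hC' (this ▸ lits_var_mem hl)
      · exact hc hc'
/-! ### Module 13: assembling the main theorem -/

lemma filter_dope_subset {F F' : ClauseSet} {u : Clause → ℕ} {P' : Clause}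
    (hu : freshDoping u F) (hsubF : F' ⊆ F)
    (hP'sub : P' ⊆ F'.image (fun C => ((u C, true) : Lit)) ∪ pureC F') :
    F.filter (fun C => ((u C, true) : Lit) ∈ P') ⊆ F' := by
  intro C hC
  rcases Finset.mem_filter.mp hC with ⟨hCF, hCP⟩
  rcases Finset.mem_union.mp (hP'sub hCP) with h | h
  · rcases Finset.mem_image.mp h with ⟨C', hC', heq⟩
    have : u C' = u C := congrArg Prod.fst heq
    rwa [← hu.2 (hsubF hC') hCF this]
  · exfalso
    exact hu.1 C hCF (vars_mono hsubF (lits_var_mem (mem_pureC.mp h).1))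

lemma main_primeSet (F : ClauseSet) (u : Clause → ℕ)
    (hsmu : saturatedMU F) (hdef : F.card = (vars F).card + 1)
    (hu : freshDoping u F) :
    primeSet (dope u F) =
      (fun F' => pureC (dope u F')) '' {F' : ClauseSet | F' ⊆ F ∧ F'.Nonempty} := by
  have htree : IsTree F := smu1_isTree ((vars F).card) F rfl hsmu hdef
  ext P
  simp only [primeSet, Set.mem_setOf_eq, Set.mem_image]
  constructor
  · rintro ⟨htf, hent, hmin⟩
    have hPsi := entails_to_Psi hu htf hent
    obtain ⟨F'', hsub'', hne'', hpure''⟩ := KL2 htree _ (Finset.filter_subset _ _) _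
      (tautFree_mono (Finset.filter_subset _ _) htf) hPsi
    have hsubF : F'' ⊆ F := hsub''.trans (Finset.filter_subset _ _)
    set P₀ := pureC (dope u F'') with hP₀
    have hP₀eq : P₀ = F''.image (fun C => ((u C, true) : Lit)) ∪ pureC F'' :=
      pureC_dope hu hsubF
    have hent₀ : entails (dope u F) P₀ := by
      refine Psi_to_entails P₀ hsubF (KL1 htree _ hsubF hne'') ?_ ?_
      · intro C hC
        rw [hP₀eq]
        exact Finset.mem_union_left _ (Finset.mem_image_of_mem _ hC)
      · rw [hP₀eq]
        exact Finset.subset_union_right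
    have hP₀P : P₀ ⊆ P := by
      rw [hP₀eq]
      intro x hx
      rcases Finset.mem_union.mp hx with h | h
      · rcases Finset.mem_image.mp h with ⟨C, hC, rfl⟩
        exact (Finset.mem_filter.mp (hsub'' hC)).2
      · exact Finset.filter_subset _ _ (hpure'' h)
    have hP₀eqP : P₀ = P := by
      by_contra hne
      exact hmin P₀ (Finset.ssubset_iff_subset_ne.mpr ⟨hP₀P, hne⟩) hent₀
    exact ⟨F'', ⟨hsubF, hne''⟩, hP₀eqP⟩
  · rintro ⟨F', ⟨hsubF, hneF⟩, rfl⟩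
    have hPeq : pureC (dope u F') = F'.image (fun C => ((u C, true) : Lit)) ∪ pureC F' :=
      pureC_dope hu hsubF
    refine ⟨pureC_tautFree _, ?_, ?_⟩
    · refine Psi_to_entails _ hsubF (KL1 htree _ hsubF hneF) ?_ ?_
      · intro C hC
        rw [hPeq]
        exact Finset.mem_union_left _ (Finset.mem_image_of_mem _ hC)
      · rw [hPeq]
        exact Finset.subset_union_right
    · intro P' hP' hent'
      have htf' : tautFree P' := tautFree_mono hP'.1 (pureC_tautFree _)
      have hPsi' := entails_to_Psi hu htf' hent'
      have hF'sub : F.filter (fun C => ((u C, true) : Lit) ∈ P') ⊆ F' :=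
        filter_dope_subset hu hsubF (hP'.1.trans (le_of_eq hPeq))
      have hQ'sub : P'.filter (fun x => x.1 ∈ vars F) ⊆ pureC F' := by
        intro x hx
        rcases Finset.mem_filter.mp hx with ⟨hxP', hxF⟩
        rcases Finset.mem_union.mp ((hPeq ▸ hP'.1) hxP') with h | h
        · exfalso
          rcases Finset.mem_image.mp h with ⟨C, hC, heq⟩
          apply hu.1 C (hsubF hC)
          rw [show u C = x.1 from congrArg Prod.fst heq]
          exact hxF
        · exact h
      rcases Finset.exists_of_ssubset hP' with ⟨y, hyP, hyP'⟩
      rcases Finset.mem_union.mp (hPeq ▸ hyP) with h | h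
      · rcases Finset.mem_image.mp h with ⟨C₀, hC₀, rfl⟩
        have hsub2 : F.filter (fun C => ((u C, true) : Lit) ∈ P') ⊆ F'.erase C₀ := by
          intro C hC
          refine Finset.mem_erase.mpr ⟨?_, hF'sub hC⟩
          rintro rfl
          exact hyP' (Finset.mem_filter.mp hC).2
        exact KL3b htree _ hsubF C₀ hC₀
          (Psi_mono_right hQ'sub (Psi_mono_left hsub2 hPsi'))
      · have hsubQ : P'.filter (fun x => x.1 ∈ vars F) ⊆ (pureC F').erase y := by
          intro x hx
          refine Finset.mem_erase.mpr ⟨?_, hQ'sub hx⟩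
          rintro rfl
          exact hyP' (Finset.mem_filter.mp hx).1
        exact KL3a htree _ hsubF y h
          (Psi_mono_right hsubQ (Psi_mono_left hF'sub hPsi'))

/-- For F saturated minimally unsatisfiable of deficiency 1, D(F) has exactly
2^{c(F)} - 1 prime implicates, namely { pure(D(F')) : ∅ ≠ F' ⊆ F }. -/
theorem dope_smu1_primeImplicates (F : ClauseSet) (u : Clause → ℕ)
    (hsmu : saturatedMU F) (hdef : F.card = (vars F).card + 1)
    (hu : freshDoping u F) :
    primeSet (dope u F) =
        (fun F' => pureC (dope u F')) '' {F' : ClauseSet | F' ⊆ F ∧ F'.Nonempty} ∧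
      (primeSet (dope u F)).ncard = 2 ^ F.card - 1 := by
  classical
  have hset := main_primeSet F u hsmu hdef hu
  have hsetfin : {F' : ClauseSet | F' ⊆ F ∧ F'.Nonempty}
      = ↑(F.powerset.filter (fun G => G.Nonempty)) := by
    ext G
    simp [Finset.mem_powerset]
  refine ⟨hset, ?_⟩
  have hinj : Set.InjOn (fun F' => pureC (dope u F'))
      ↑(F.powerset.filter (fun G => G.Nonempty)) := by
    intro F₁ h₁ F₂ h₂ heq
    simp only [Finset.coe_filter, Set.mem_setOf_eq, Finset.mem_powerset] at h₁ h₂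
    have hsub₁ : F₁ ⊆ F := h₁.1
    have hsub₂ : F₂ ⊆ F := h₂.1
    have e₁ := pureC_dope hu hsub₁
    have e₂ := pureC_dope hu hsub₂
    simp only at heq
    ext C
    constructor
    · intro hC
      have hmem : ((u C, true) : Lit) ∈ pureC (dope u F₂) := by
        rw [← heq, e₁]
        exact Finset.mem_union_left _ (Finset.mem_image_of_mem _ hC)
      rw [e₂] at hmem
      rcases Finset.mem_union.mp hmem with h | h
      · rcases Finset.mem_image.mp h with ⟨C', hC', heq'⟩
        have : u C' = u C := congrArg Prod.fst heq'
        rwa [← hu.2 (hsub₂ hC') (hsub₁ (by assumption)) this]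
      · exact absurd (lits_var_mem (mem_pureC.mp h).1)
          (fun hm => hu.1 C (hsub₁ hC) (vars_mono hsub₂ hm))
    · intro hC
      have hmem : ((u C, true) : Lit) ∈ pureC (dope u F₁) := by
        rw [heq, e₂]
        exact Finset.mem_union_left _ (Finset.mem_image_of_mem _ hC)
      rw [e₁] at hmem
      rcases Finset.mem_union.mp hmem with h | h
      · rcases Finset.mem_image.mp h with ⟨C', hC', heq'⟩
        have : u C' = u C := congrArg Prod.fst heq'
        rwa [← hu.2 (hsub₁ hC') (hsub₂ (by assumption)) this]
      · exact absurd (lits_var_mem (mem_pureC.mp h).1)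
          (fun hm => hu.1 C (hsub₂ hC) (vars_mono hsub₁ hm))
  rw [hset, hsetfin, ← Finset.coe_image, Set.ncard_coe_finset]
  rw [Finset.card_image_of_injOn hinj]
  have hfilter : F.powerset.filter (fun G => G.Nonempty) = F.powerset.erase ∅ := by
    ext G
    simp only [Finset.mem_filter, Finset.mem_erase, Finset.nonempty_iff_ne_empty]
    tauto
  rw [hfilter, Finset.card_erase_of_mem (Finset.empty_mem_powerset F), Finset.card_powerset]
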